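/- arXiv:2501.14725 — 6 statements merged into one kernel-verified Lean document; each statement's English description precedes it below -/
import Mathlib

section
/- For every real ε > 0 there exists N₀ ∈ ℕ such that for every finite set A of positive integers whose sum N = ∑_{a ∈ A} a satisfies N ≥ N₀, one has ∑_{(a,b) ∈ A×A} gcd(a,b) ≤ N^{1+ε}. In particular, if the elements of A sum to N, then ∑_{a,b ∈ A} gcd(a,b) ≤ N^{1+o(1)}. -/
open Finset


lemma sum_distinct_pos (S : Finset ℕ) (h : ∀ s ∈ S, 0 < s) :
    S.card * S.card ≤ 2 * ∑ s ∈ S, s := by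
  induction S using Finset.strongInduction with
  | _ S ih =>
    rcases S.eq_empty_or_nonempty with rfl | hne
    · simp
    · set m := S.max' hne with hm_def
      have hm : m ∈ S := S.max'_mem hne
      have hsub : S ⊆ Finset.Icc 1 m := fun x hx =>
        Finset.mem_Icc.mpr ⟨h x hx, S.le_max' x hx⟩
      have hcard : S.card ≤ m := by
        calc S.card ≤ (Finset.Icc 1 m).card := Finset.card_le_card hsub
        _ = m := by simp
      have hih := ih (S.erase m) (Finset.erase_ssubset hm)
        (fun s hs => h s (Finset.mem_of_mem_erase hs))
      have hsum : ∑ s ∈ S, s = m + ∑ s ∈ S.erase m, s :=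
        (Finset.add_sum_erase S id hm).symm
      have hc : (S.erase m).card = S.card - 1 := Finset.card_erase_of_mem hm
      have hpos : 1 ≤ S.card := Finset.card_pos.mpr hne
      rw [hc] at hih
      rw [hsum]
      obtain ⟨k, hk⟩ : ∃ k, S.card = k + 1 :=
        ⟨S.card - 1, (Nat.succ_pred_eq_of_pos hpos).symm⟩
      rw [hk] at hih hcard ⊢
      simp only [Nat.add_sub_cancel] at hih
      nlinarith [hih, hcard]

lemma mult_count (d : ℕ) (A : Finset ℕ) (hA : ∀ a ∈ A, 0 < a) :
    d * ((A.filter (fun b => d ∣ b)).card * (A.filter (fun b => d ∣ b)).card)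
      ≤ 2 * ∑ a ∈ A.filter (fun b => d ∣ b), a := by
  rcases Nat.eq_zero_or_pos d with rfl | hd
  · simp
  · set B := A.filter (fun b => d ∣ b) with hB
    have hBmem : ∀ b ∈ B, d ∣ b ∧ 0 < b := fun b hb => by
      rw [hB, Finset.mem_filter] at hb
      exact ⟨hb.2, hA b hb.1⟩
    have hinj : Set.InjOn (· / d) B := by
      intro x hx y hy hxy
      have hx' := (hBmem x hx).1
      have hy' := (hBmem y hy).1
      have := congrArg (· * d) hxy
      simpa [Nat.div_mul_cancel hx', Nat.div_mul_cancel hy'] using this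
    have hcard : (B.image (· / d)).card = B.card := Finset.card_image_of_injOn hinj
    have hposS : ∀ s ∈ B.image (· / d), 0 < s := by
      intro s hs
      rcases Finset.mem_image.mp hs with ⟨b, hb, rfl⟩
      exact Nat.div_pos (Nat.le_of_dvd (hBmem b hb).2 (hBmem b hb).1) hd
    have hkey := sum_distinct_pos (B.image (· / d)) hposS
    rw [hcard, Finset.sum_image hinj] at hkey
    calc d * (B.card * B.card) ≤ d * (2 * ∑ b ∈ B, b / d) :=
          Nat.mul_le_mul_left d hkey
      _ = 2 * ∑ b ∈ B, d * (b / d) := by rw [mul_left_comm, Finset.mul_sum]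
      _ = 2 * ∑ b ∈ B, b := by
          congr 1
          exact Finset.sum_congr rfl fun b hb => Nat.mul_div_cancel' (hBmem b hb).1

lemma divisors_eq_filter_range {a N : ℕ} (ha : 0 < a) (haN : a ≤ N) :
    (Finset.range (N + 1)).filter (fun d => d ∣ a) = a.divisors := by
  ext d
  simp only [Finset.mem_filter, Finset.mem_range, Nat.mem_divisors, Nat.lt_succ_iff]
  constructor
  · rintro ⟨-, hd⟩; exact ⟨hd, ha.ne'⟩
  · rintro ⟨hd, -⟩; exact ⟨le_trans (Nat.le_of_dvd ha hd) haN, hd⟩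

lemma key_nat (A : Finset ℕ) (hA : ∀ a ∈ A, 0 < a) :
    ∑ a ∈ A, ∑ b ∈ A, Nat.gcd a b ≤ 2 * ∑ a ∈ A, a * a.divisors.card := by
  set N := ∑ a ∈ A, a with hN
  have haN : ∀ a ∈ A, a ≤ N := fun a ha => Finset.single_le_sum (fun i _ => Nat.zero_le i) ha
  set c : ℕ → ℕ := fun d => (A.filter (fun b => d ∣ b)).card with hc
  -- Step 1: per-row bound
  have step1 : ∀ a ∈ A, ∑ b ∈ A, Nat.gcd a b ≤ ∑ d ∈ a.divisors, d * c d := by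
    intro a ha
    have hmaps : ∀ b ∈ A, Nat.gcd a b ∈ a.divisors :=
      fun b hb => Nat.mem_divisors.mpr ⟨Nat.gcd_dvd_left a b, (hA a ha).ne'⟩
    rw [← Finset.sum_fiberwise_of_maps_to hmaps (fun b => Nat.gcd a b)]
    apply Finset.sum_le_sum
    intro d hd
    have hsub : A.filter (fun b => Nat.gcd a b = d) ⊆ A.filter (fun b => d ∣ b) := by
      apply Finset.monotone_filter_right
      intro b _ hb
      exact hb ▸ Nat.gcd_dvd_right a b
    calc ∑ b ∈ A.filter (fun b => Nat.gcd a b = d), Nat.gcd a b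
        = ∑ b ∈ A.filter (fun b => Nat.gcd a b = d), d := by
          apply Finset.sum_congr rfl
          intro b hb
          exact (Finset.mem_filter.mp hb).2
      _ = (A.filter (fun b => Nat.gcd a b = d)).card * d := by
          rw [Finset.sum_const, smul_eq_mul]
      _ ≤ c d * d := Nat.mul_le_mul_right d (Finset.card_le_card hsub)
      _ = d * c d := Nat.mul_comm _ _
  -- Step 2: rewrite divisor sums as range sums
  have step2 : ∀ a ∈ A, ∀ f : ℕ → ℕ,
      ∑ d ∈ a.divisors, f d = ∑ d ∈ Finset.range (N + 1), if d ∣ a then f d else 0 := by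
    intro a ha f
    rw [← divisors_eq_filter_range (hA a ha) (haN a ha), Finset.sum_filter]
  calc ∑ a ∈ A, ∑ b ∈ A, Nat.gcd a b
      ≤ ∑ a ∈ A, ∑ d ∈ a.divisors, d * c d := Finset.sum_le_sum step1
    _ = ∑ a ∈ A, ∑ d ∈ Finset.range (N + 1), (if d ∣ a then d * c d else 0) := by
        apply Finset.sum_congr rfl
        intro a ha
        exact step2 a ha _
    _ = ∑ d ∈ Finset.range (N + 1), ∑ a ∈ A, (if d ∣ a then d * c d else 0) :=
        Finset.sum_comm
    _ = ∑ d ∈ Finset.range (N + 1), d * (c d * c d) := by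
        apply Finset.sum_congr rfl
        intro d _
        rw [← Finset.sum_filter, Finset.sum_const, smul_eq_mul]
        ring
    _ ≤ ∑ d ∈ Finset.range (N + 1), 2 * ∑ a ∈ A.filter (fun b => d ∣ b), a :=
        Finset.sum_le_sum fun d _ => mult_count d A hA
    _ = 2 * ∑ d ∈ Finset.range (N + 1), ∑ a ∈ A, (if d ∣ a then a else 0) := by
        rw [Finset.mul_sum]
        apply Finset.sum_congr rfl
        intro d _
        rw [Finset.sum_filter]
    _ = 2 * ∑ a ∈ A, ∑ d ∈ Finset.range (N + 1), (if d ∣ a then a else 0) := by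
        rw [Finset.sum_comm]
    _ = 2 * ∑ a ∈ A, a * a.divisors.card := by
        congr 1
        apply Finset.sum_congr rfl
        intro a ha
        rw [← step2 a ha (fun _ => a), Finset.sum_const, smul_eq_mul, Nat.mul_comm]


lemma divisor_bound (ε : ℝ) (hε : 0 < ε) :
    ∃ C : ℝ, 1 ≤ C ∧ ∀ n : ℕ, 0 < n → (n.divisors.card : ℝ) ≤ C * (n : ℝ) ^ ε := by
  have hlog2 : 0 < Real.log 2 := Real.log_pos (by norm_num)
  set K : ℝ := max 1 (2 / (ε * Real.log 2)) with hK
  have hK1 : 1 ≤ K := le_max_left _ _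
  have hK0 : 0 ≤ K := zero_le_one.trans hK1
  set B : ℕ := ⌊(2 : ℝ) ^ ε⁻¹⌋₊ + 1 with hB
  refine ⟨K ^ B, one_le_pow₀ hK1, ?_⟩
  intro n hn
  have hn' : n ≠ 0 := hn.ne'
  -- per-prime bound
  have hprime : ∀ p ∈ n.primeFactors,
      ((n.factorization p + 1 : ℕ) : ℝ) ≤
        (if (p : ℝ) ^ ε < 2 then K else 1) * ((p : ℝ) ^ (n.factorization p : ℕ)) ^ ε := by
    intro p hp
    have hpp : p.Prime := Nat.prime_of_mem_primeFactors hp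
    have hp2 : (2 : ℝ) ≤ (p : ℝ) := by exact_mod_cast hpp.two_le
    have hp0 : (0 : ℝ) ≤ (p : ℝ) := by positivity
    set e : ℕ := n.factorization p with he
    have hrw : ((p : ℝ) ^ e) ^ ε = ((p : ℝ) ^ ε) ^ e := by
      rw [← Real.rpow_natCast (p : ℝ) e, ← Real.rpow_mul hp0, mul_comm,
        Real.rpow_mul hp0, Real.rpow_natCast]
    by_cases hsmall : (p : ℝ) ^ ε < 2
    · simp only [hsmall, if_true]
      rcases Nat.eq_zero_or_pos e with he0 | he1
      · rw [he0]
        simp only [pow_zero, Real.one_rpow, mul_one]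
        simpa using hK1
      · -- X := ((p:ℝ)^e)^ε ≥ 2^(e·ε) = exp(log2·(e·ε)) ≥ log2·(e·ε)
        have hXge : Real.log 2 * ((e : ℝ) * ε) ≤ ((p : ℝ) ^ e) ^ ε := by
          have h1 : ((2 : ℝ) ^ e) ^ ε ≤ ((p : ℝ) ^ e) ^ ε :=
            Real.rpow_le_rpow (by positivity) (pow_le_pow_left₀ (by norm_num) hp2 e) hε.le
          have h2 : ((2 : ℝ) ^ e) ^ ε = Real.exp (Real.log 2 * ((e : ℝ) * ε)) := by
            rw [← Real.rpow_natCast (2 : ℝ) e, ← Real.rpow_mul (by norm_num),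
              Real.rpow_def_of_pos (by norm_num)]
          calc Real.log 2 * ((e : ℝ) * ε)
              ≤ Real.exp (Real.log 2 * ((e : ℝ) * ε)) := by
                linarith [Real.add_one_le_exp (Real.log 2 * ((e : ℝ) * ε))]
            _ = ((2 : ℝ) ^ e) ^ ε := h2.symm
            _ ≤ _ := h1
        have hKge : 2 / (ε * Real.log 2) ≤ K := le_max_right _ _
        have hstep : 2 / (ε * Real.log 2) * (Real.log 2 * ((e : ℝ) * ε)) = 2 * e := by
          field_simp
        have he1' : (1 : ℝ) ≤ (e : ℝ) := by exact_mod_cast he1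
        calc ((e + 1 : ℕ) : ℝ) ≤ 2 * (e : ℝ) := by push_cast; linarith
          _ = 2 / (ε * Real.log 2) * (Real.log 2 * ((e : ℝ) * ε)) := hstep.symm
          _ ≤ K * (Real.log 2 * ((e : ℝ) * ε)) :=
              mul_le_mul_of_nonneg_right hKge (by positivity)
          _ ≤ K * (((p : ℝ) ^ e) ^ ε) := mul_le_mul_of_nonneg_left hXge hK0
    · simp only [hsmall, if_false, one_mul]
      push_neg at hsmall
      have h1 : ((e + 1 : ℕ) : ℝ) ≤ (2 : ℝ) ^ e := by
        exact_mod_cast Nat.succ_le_of_lt (Nat.lt_two_pow_self (n := e))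
      have h2 : (2 : ℝ) ^ e ≤ ((p : ℝ) ^ ε) ^ e :=
        pow_le_pow_left₀ (by norm_num) hsmall e
      rw [hrw]
      exact h1.trans h2
  -- assemble products
  have hτ : (n.divisors.card : ℝ)
      = ∏ p ∈ n.primeFactors, ((n.factorization p + 1 : ℕ) : ℝ) := by
    rw [Nat.card_divisors hn']
    push_cast
    rfl
  have hnr : (n : ℝ) = ∏ p ∈ n.primeFactors, (p : ℝ) ^ (n.factorization p : ℕ) := by
    conv_lhs => rw [← Nat.factorization_prod_pow_eq_self hn']
    rw [Nat.prod_factorization_eq_prod_primeFactors]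
    push_cast
    rfl
  have hprod : (n : ℝ) ^ ε
      = ∏ p ∈ n.primeFactors, ((p : ℝ) ^ (n.factorization p : ℕ)) ^ ε := by
    rw [hnr, Real.finset_prod_rpow _ _ (fun p _ => by positivity) ε]
  -- count small primes
  have hcard : (n.primeFactors.filter (fun p : ℕ => (p : ℝ) ^ ε < 2)).card ≤ B := by
    have hsub : n.primeFactors.filter (fun p : ℕ => (p : ℝ) ^ ε < 2) ⊆ Finset.range B := by
      intro p hp
      rw [Finset.mem_filter] at hp
      have hpp : p.Prime := Nat.prime_of_mem_primeFactors hp.1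
      have hp0 : (0 : ℝ) ≤ (p : ℝ) := by positivity
      have : (p : ℝ) < (2 : ℝ) ^ ε⁻¹ := by
        have := Real.rpow_lt_rpow (by positivity) hp.2 (inv_pos.mpr hε)
        rwa [Real.rpow_rpow_inv hp0 hε.ne'] at this
      have hfl : p ≤ ⌊(2 : ℝ) ^ ε⁻¹⌋₊ := Nat.le_floor this.le
      rw [Finset.mem_range, hB]
      omega
    calc _ ≤ (Finset.range B).card := Finset.card_le_card hsub
      _ = B := Finset.card_range B
  calc (n.divisors.card : ℝ)
      = ∏ p ∈ n.primeFactors, ((n.factorization p + 1 : ℕ) : ℝ) := hτ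
    _ ≤ ∏ p ∈ n.primeFactors,
          (if (p : ℝ) ^ ε < 2 then K else 1) * ((p : ℝ) ^ (n.factorization p : ℕ)) ^ ε :=
        Finset.prod_le_prod (fun p _ => by positivity) hprime
    _ = (∏ p ∈ n.primeFactors, if (p : ℝ) ^ ε < 2 then K else 1)
          * ∏ p ∈ n.primeFactors, ((p : ℝ) ^ (n.factorization p : ℕ)) ^ ε :=
        Finset.prod_mul_distrib
    _ ≤ K ^ B * (n : ℝ) ^ ε := by
        rw [← hprod]
        apply mul_le_mul_of_nonneg_right _ (by positivity)
        rw [← Finset.prod_filter]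
        rw [Finset.prod_const]
        exact pow_le_pow_right₀ hK1 hcard

/-- For every real `ε > 0` there exists `N₀ ∈ ℕ` such that for every
finite set `A` of positive integers whose sum `N = ∑_{a ∈ A} a` satisfies `N ≥ N₀`, one has
`∑_{(a,b) ∈ A×A} gcd(a,b) ≤ N^{1+ε}`; i.e. `∑_{a,b ∈ A} gcd(a,b) ≤ N^{1+o(1)}`. -/
theorem sum_sum_gcd_le_rpow (ε : ℝ) (hε : 0 < ε) :
    ∃ N₀ : ℕ, ∀ A : Finset ℕ, (∀ a ∈ A, 0 < a) → N₀ ≤ ∑ a ∈ A, a →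
      ((∑ a ∈ A, ∑ b ∈ A, Nat.gcd a b : ℕ) : ℝ) ≤ ((∑ a ∈ A, a : ℕ) : ℝ) ^ (1 + ε) := by
  obtain ⟨C, hC1, hC⟩ := divisor_bound (ε / 2) (half_pos hε)
  have hC0 : (0 : ℝ) < C := lt_of_lt_of_le one_pos hC1
  refine ⟨⌈(2 * C) ^ (2 / ε)⌉₊ + 1, ?_⟩
  intro A hA hN₀
  set N := ∑ a ∈ A, a with hNdef
  have hN1 : 1 ≤ N := le_trans (Nat.le_add_left 1 _) hN₀
  have hN0 : (0 : ℝ) < (N : ℝ) := by exact_mod_cast hN1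
  have haN : ∀ a ∈ A, a ≤ N := fun a ha =>
    Finset.single_le_sum (fun i _ => Nat.zero_le i) ha
  -- the main real-side bound: 2C ≤ N^(ε/2)
  have h2C : 2 * C ≤ (N : ℝ) ^ (ε / 2) := by
    have hx0 : (0 : ℝ) ≤ (2 * C) ^ (2 / ε) := by positivity
    have hNx : (2 * C) ^ (2 / ε) ≤ (N : ℝ) := by
      calc (2 * C) ^ (2 / ε) ≤ (⌈(2 * C) ^ (2 / ε)⌉₊ : ℝ) := Nat.le_ceil _
        _ ≤ ((⌈(2 * C) ^ (2 / ε)⌉₊ + 1 : ℕ) : ℝ) := by push_cast; linarith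
        _ ≤ (N : ℝ) := by exact_mod_cast hN₀
    calc 2 * C = ((2 * C) ^ (2 / ε)) ^ (ε / 2) := by
          rw [← Real.rpow_mul (by positivity)]
          rw [show 2 / ε * (ε / 2) = 1 by field_simp]
          rw [Real.rpow_one]
      _ ≤ (N : ℝ) ^ (ε / 2) := Real.rpow_le_rpow hx0 hNx (by positivity)
  have hkey := key_nat A hA
  calc ((∑ a ∈ A, ∑ b ∈ A, Nat.gcd a b : ℕ) : ℝ)
      ≤ ((2 * ∑ a ∈ A, a * a.divisors.card : ℕ) : ℝ) := by exact_mod_cast hkey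
    _ = 2 * ∑ a ∈ A, (a : ℝ) * (a.divisors.card : ℝ) := by push_cast; ring
    _ ≤ 2 * ∑ a ∈ A, (a : ℝ) * (C * (N : ℝ) ^ (ε / 2)) := by
        apply mul_le_mul_of_nonneg_left _ (by norm_num)
        apply Finset.sum_le_sum
        intro a ha
        apply mul_le_mul_of_nonneg_left _ (Nat.cast_nonneg a)
        calc (a.divisors.card : ℝ) ≤ C * (a : ℝ) ^ (ε / 2) := hC a (hA a ha)
          _ ≤ C * (N : ℝ) ^ (ε / 2) := by
              apply mul_le_mul_of_nonneg_left _ hC0.le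
              exact Real.rpow_le_rpow (Nat.cast_nonneg a)
                (by exact_mod_cast haN a ha) (by positivity)
    _ = 2 * C * (N : ℝ) ^ (ε / 2) * (N : ℝ) := by
        rw [← Finset.sum_mul]
        have : (∑ a ∈ A, (a : ℝ)) = (N : ℝ) := by rw [hNdef]; push_cast; rfl
        rw [this]; ring
    _ ≤ (N : ℝ) ^ (ε / 2) * (N : ℝ) ^ (ε / 2) * (N : ℝ) := by
        apply mul_le_mul_of_nonneg_right _ hN0.le
        exact mul_le_mul_of_nonneg_right h2C (by positivity)
    _ = (N : ℝ) ^ (1 + ε) := by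
        rw [Real.rpow_add hN0, Real.rpow_one,
          show ε = ε / 2 + ε / 2 by ring, Real.rpow_add hN0]
        ring_nf
end

section
/- Let G = (V, E) be a directed graph with edge weights ω : E → ℤ and distinguished vertices s, t ∈ V such that every vertex of G lies on some walk from s to t. Then the following are equivalent: (1) there exist vertices p, q ∈ V, an integer ℓ₀ ≥ 0, walks of length ℓ₀ from s to p and from s to q, an integer ℓ > 0, and cycles of length ℓ at p and at q whose total weights differ; (2) G contains two cycles of different average weight. -/
/-- A walk from `u` to `v` in a directed graph with edge set `E`, represented by its
(nonempty) list of visited vertices: it starts at `u`, ends at `v`, and consecutive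
vertices are joined by edges. Its length is `l.length - 1`; a cycle at `v` is a walk of
positive length from `v` to `v`. -/
def IsWalk {V : Type*} (E : Set (V × V)) (u v : V) (l : List V) : Prop :=
  l.head? = some u ∧ l.getLast? = some v ∧ l.Chain' (fun a b => (a, b) ∈ E)

/-- The total weight of a walk: the sum of the weights of its consecutive edge pairs,
counted with multiplicity. -/
def walkWeight {V W : Type*} [AddCommMonoid W] (ω : V × V → W) (l : List V) : W :=
  ((l.zip l.tail).map ω).sum

section Aux
variable {V : Type*} {W : Type*} [AddCommMonoid W] {E : Set (V × V)} (ω : V × V → W)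

lemma walkWeight_nil : walkWeight ω ([] : List V) = 0 := by simp [walkWeight]

lemma walkWeight_single (a : V) : walkWeight ω [a] = 0 := by simp [walkWeight]

lemma walkWeight_cons_cons (a b : V) (l : List V) :
    walkWeight ω (a :: b :: l) = ω (a, b) + walkWeight ω (b :: l) := by
  simp [walkWeight]

lemma walkWeight_append : ∀ (l₁ l₂ : List V) (v : V),
    l₁.getLast? = some v → l₂.head? = some v →
    walkWeight ω (l₁ ++ l₂.tail) = walkWeight ω l₁ + walkWeight ω l₂
  | [], _, v, h, _ => by simp at h
  | [a], l₂, v, h, h2 => by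
      match l₂, h2 with
      | b :: t, h2 =>
        simp at h h2
        subst h; subst h2
        simp [walkWeight_single]
  | a :: b :: r, l₂, v, h, h2 => by
      rw [List.cons_append, List.cons_append, walkWeight_cons_cons, walkWeight_cons_cons,
        ← List.cons_append, walkWeight_append (b :: r) l₂ v (by simpa using h) h2, add_assoc]

lemma chain'_append_walk {R : V → V → Prop} : ∀ (l₁ l₂ : List V) (v : V),
    l₁.getLast? = some v → l₂.head? = some v →
    l₁.Chain' R → l₂.Chain' R → (l₁ ++ l₂.tail).Chain' R
  | [], _, v, h, _, _, _ => by simp at h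
  | [a], l₂, v, h, h2, _, hc2 => by
      match l₂, h2 with
      | b :: t, h2 =>
        simp at h h2
        subst h; subst h2
        simpa using hc2
  | a :: b :: r, l₂, v, h, h2, hc1, hc2 => by
      unfold List.Chain' at hc1 ⊢
      rw [List.cons_append, List.cons_append, List.isChain_cons_cons]
      rw [List.isChain_cons_cons] at hc1
      exact ⟨hc1.1, chain'_append_walk (b :: r) l₂ v (by simpa using h) h2 hc1.2 hc2⟩

lemma IsWalk.trans {u v w : V} {l₁ l₂ : List V} (h₁ : IsWalk E u v l₁)
    (h₂ : IsWalk E v w l₂) : IsWalk E u w (l₁ ++ l₂.tail) := by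
  obtain ⟨ha1, hb1, hc1⟩ := h₁
  obtain ⟨ha2, hb2, hc2⟩ := h₂
  refine ⟨?_, ?_, chain'_append_walk l₁ l₂ v hb1 ha2 hc1 hc2⟩
  · match l₁, ha1 with
    | a :: r, ha1 => simpa using ha1
  · match l₂, ha2 with
    | b :: t, ha2 =>
      simp only [List.head?_cons, Option.some.injEq] at ha2
      subst ha2
      match t, hb2 with
      | [], hb2 => simp at hb2 ⊢; rw [hb1]; simpa using hb2
      | c :: t', hb2 =>
        rw [List.tail_cons, List.getLast?_append]
        simp only [List.getLast?_cons_cons] at hb2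
        rw [hb2]; rfl

lemma length_trans {l₁ l₂ : List V} (h : l₂ ≠ []) :
    (l₁ ++ l₂.tail).length = l₁.length + l₂.length - 1 := by
  rw [List.length_append, List.length_tail]
  have := List.length_pos_iff.mpr h
  omega

end Aux

section Aux2
variable {V : Type*} {E : Set (V × V)} (ω : V × V → ℤ)

/-- Rotate a cycle by one step. -/
lemma rotate_step {p : V} {c : List V} (h : IsWalk E p p c) (hl : 2 ≤ c.length) :
    ∃ p' c', (p, p') ∈ E ∧ IsWalk E p' p' c' ∧ c'.length = c.length ∧
      walkWeight ω c' = walkWeight ω c := by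
  match c, hl with
  | a :: b :: r, _ =>
    obtain ⟨h1, h2, h3⟩ := h
    simp only [List.head?_cons, Option.some.injEq] at h1
    subst h1
    unfold List.Chain' at h3
    rw [List.isChain_cons_cons] at h3
    refine ⟨b, (b :: r) ++ [b], h3.1, ⟨?_, ?_, ?_⟩, ?_, ?_⟩
    · simp
    · exact List.getLast?_concat
    · have : ([a, b] : List V).tail = [b] := rfl
      rw [← this]
      exact chain'_append_walk (b :: r) [a, b] a (by simpa using h2) rfl h3.2
        (List.isChain_pair.mpr h3.1)
    · simp
    · have : ([a, b] : List V).tail = [b] := rfl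
      rw [← this, walkWeight_append ω (b :: r) [a, b] a (by simpa using h2) rfl,
        walkWeight_cons_cons, walkWeight_single, walkWeight_cons_cons ω a b r]
      ring

/-- Walks of a given length from `s` to a vertex carrying a cycle of length `ℓ+1`
and weight `w` propagate to every larger length. -/
lemma good_mono (s : V) (ℓ : ℕ) (hℓ : 0 < ℓ) (w : ℤ) (n : ℕ)
    (h : ∃ (p : V) (wk c : List V), IsWalk E s p wk ∧ wk.length = n + 1 ∧
      IsWalk E p p c ∧ c.length = ℓ + 1 ∧ walkWeight ω c = w) :
    ∀ j : ℕ, ∃ (p : V) (wk c : List V), IsWalk E s p wk ∧ wk.length = n + j + 1 ∧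
      IsWalk E p p c ∧ c.length = ℓ + 1 ∧ walkWeight ω c = w := by
  intro j
  induction j with
  | zero => exact h
  | succ j ih =>
    obtain ⟨p, wk, c, hwk, hwkl, hc, hcl, hcw⟩ := ih
    obtain ⟨p', c', hE, hc', hcl', hcw'⟩ := rotate_step ω hc (by omega)
    have hw2 : IsWalk E p p' [p, p'] := ⟨rfl, rfl, List.isChain_pair.mpr hE⟩
    refine ⟨p', wk ++ [p'], c', ?_, ?_, hc', by omega, by rw [hcw', hcw]⟩
    · have : ([p, p'] : List V).tail = [p'] := rfl
      rw [← this]; exact hwk.trans hw2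
    · simp [hwkl]; omega
  
/-- Repeat a cycle `k` times. -/
lemma cycle_pow {p : V} {c : List V} (hc : IsWalk E p p c) (ℓ : ℕ) (hcl : c.length = ℓ + 1)
    (hℓ : 0 < ℓ) : ∀ k : ℕ, 0 < k → ∃ c' : List V, IsWalk E p p c' ∧
      c'.length = k * ℓ + 1 ∧ walkWeight ω c' = k * walkWeight ω c := by
  intro k
  induction k with
  | zero => omega
  | succ k ih =>
    intro _
    rcases Nat.eq_zero_or_pos k with hk | hk
    · subst hk; exact ⟨c, hc, by omega, by push_cast; ring⟩
    · obtain ⟨c', hc', hcl', hcw'⟩ := ih hk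
      refine ⟨c' ++ c.tail, hc'.trans hc, ?_, ?_⟩
      · rw [length_trans (by intro h; simp [h] at hcl), hcl', hcl, Nat.succ_mul]
        omega
      · have h2 : c.head? = some p := hc.1
        have h1 : c'.getLast? = some p := hc'.2.1
        rw [walkWeight_append ω c' c p h1 h2, hcw']
        push_cast; ring

/-- Every vertex admits a walk from `s`. -/
lemma exists_walk_from (s t : V) (htrim : ∀ v : V, ∃ l : List V, IsWalk E s t l ∧ v ∈ l)
    (v : V) : ∃ l : List V, IsWalk E s v l := by
  obtain ⟨l, ⟨h1, _, h3⟩, hv⟩ := htrim v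
  obtain ⟨l₁, l₂, rfl⟩ := List.append_of_mem hv
  refine ⟨l₁ ++ [v], ?_, List.getLast?_concat, ?_⟩
  · cases l₁ with
    | nil => simpa using h1
    | cons a r => simpa using h1
  · exact h3.prefix ⟨l₂, by simp⟩

end Aux2

/-- Let `G = (V, E)` have integer edge weights `ω` and distinguished
vertices `s, t` such that every vertex lies on some walk from `s` to `t`. Then the
following are equivalent: (1) there exist vertices `p, q`, an `ℓ₀ ≥ 0`, walks of length
`ℓ₀` from `s` to `p` and from `s` to `q`, an `ℓ > 0`, and cycles of length `ℓ` at `p` and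
at `q` whose total weights differ (a pair of non-twin siblings); (2) `G` contains two
cycles of different average weight. -/
theorem non_twin_siblings_iff_two_cycles_diff_avg {V : Type*} [Fintype V]
    (E : Set (V × V)) (ω : V × V → ℤ) (s t : V)
    (htrim : ∀ v : V, ∃ l : List V, IsWalk E s t l ∧ v ∈ l) :
    (∃ (p q : V) (ℓ₀ : ℕ) (wp wq : List V) (ℓ : ℕ) (cp cq : List V),
        IsWalk E s p wp ∧ wp.length = ℓ₀ + 1 ∧
        IsWalk E s q wq ∧ wq.length = ℓ₀ + 1 ∧
        0 < ℓ ∧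
        IsWalk E p p cp ∧ cp.length = ℓ + 1 ∧
        IsWalk E q q cq ∧ cq.length = ℓ + 1 ∧
        walkWeight ω cp ≠ walkWeight ω cq) ↔
      (∃ (v₁ : V) (c₁ : List V) (v₂ : V) (c₂ : List V),
        IsWalk E v₁ v₁ c₁ ∧ 2 ≤ c₁.length ∧
        IsWalk E v₂ v₂ c₂ ∧ 2 ≤ c₂.length ∧
        ((walkWeight ω c₁ : ℤ) : ℚ) / ((c₁.length : ℚ) - 1) ≠
          ((walkWeight ω c₂ : ℤ) : ℚ) / ((c₂.length : ℚ) - 1)) := by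
  constructor
  · rintro ⟨p, q, ℓ₀, wp, wq, ℓ, cp, cq, _, _, _, _, hℓ, hcp, hcpl, hcq, hcql, hne⟩
    refine ⟨p, cp, q, cq, hcp, by omega, hcq, by omega, ?_⟩
    rw [hcpl, hcql]
    push_cast
    rw [add_sub_cancel_right]
    intro heq
    apply hne
    have hℓQ : ((ℓ : ℚ)) ≠ 0 := by exact_mod_cast hℓ.ne'
    field_simp at heq
    exact_mod_cast heq
  · rintro ⟨v₁, c₁, v₂, c₂, h1, hl1, h2, hl2, hne⟩
    set ℓ₁ := c₁.length - 1 with hℓ₁def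
    set ℓ₂ := c₂.length - 1 with hℓ₂def
    have hc₁l : c₁.length = ℓ₁ + 1 := by omega
    have hc₂l : c₂.length = ℓ₂ + 1 := by omega
    have hℓ₁ : 0 < ℓ₁ := by omega
    have hℓ₂ : 0 < ℓ₂ := by omega
    -- cross-multiplied inequality
    have hkey : (ℓ₂ : ℤ) * walkWeight ω c₁ ≠ (ℓ₁ : ℤ) * walkWeight ω c₂ := by
      intro heq
      apply hne
      rw [hc₁l, hc₂l]
      push_cast
      rw [add_sub_cancel_right, add_sub_cancel_right,
        div_eq_div_iff (by exact_mod_cast hℓ₁.ne') (by exact_mod_cast hℓ₂.ne')]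
      have : (walkWeight ω c₁ : ℤ) * ℓ₂ = walkWeight ω c₂ * ℓ₁ := by linarith
      exact_mod_cast this
    obtain ⟨wk₁, hwk₁⟩ := exists_walk_from s t htrim v₁
    obtain ⟨wk₂, hwk₂⟩ := exists_walk_from s t htrim v₂
    have hwk₁ne : wk₁ ≠ [] := by
      intro h; rw [h] at hwk₁; exact (by simpa using hwk₁.1 : False)
    have hwk₂ne : wk₂ ≠ [] := by
      intro h; rw [h] at hwk₂; exact (by simpa using hwk₂.1 : False)
    set a₁ := wk₁.length - 1 with ha₁def
    set a₂ := wk₂.length - 1 with ha₂def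
    have hwk₁l : wk₁.length = a₁ + 1 := by
      have := List.length_pos_iff.mpr hwk₁ne; omega
    have hwk₂l : wk₂.length = a₂ + 1 := by
      have := List.length_pos_iff.mpr hwk₂ne; omega
    set ℓ₀ := max a₁ a₂ with hℓ₀def
    obtain ⟨p, wp, cp₁, hwp, hwpl, hcp₁, hcp₁l, hcp₁w⟩ :=
      good_mono ω s ℓ₁ hℓ₁ (walkWeight ω c₁) a₁
        ⟨v₁, wk₁, c₁, hwk₁, hwk₁l, h1, hc₁l, rfl⟩ (ℓ₀ - a₁)
    obtain ⟨q, wq, cq₁, hwq, hwql, hcq₁, hcq₁l, hcq₁w⟩ :=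
      good_mono ω s ℓ₂ hℓ₂ (walkWeight ω c₂) a₂
        ⟨v₂, wk₂, c₂, hwk₂, hwk₂l, h2, hc₂l, rfl⟩ (ℓ₀ - a₂)
    obtain ⟨cp, hcp, hcpl, hcpw⟩ := cycle_pow ω hcp₁ ℓ₁ hcp₁l hℓ₁ ℓ₂ hℓ₂
    obtain ⟨cq, hcq, hcql, hcqw⟩ := cycle_pow ω hcq₁ ℓ₂ hcq₁l hℓ₂ ℓ₁ hℓ₁
    refine ⟨p, q, ℓ₀, wp, wq, ℓ₁ * ℓ₂, cp, cq, hwp, by omega, hwq, by omega,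
      Nat.mul_pos hℓ₁ hℓ₂, hcp, by rw [hcpl, Nat.mul_comm], hcq, hcql, ?_⟩
    rw [hcpw, hcqw, hcp₁w, hcq₁w]
    exact hkey
end

section
/- Let G = (V, E) be a directed graph with distinguished vertices s, t ∈ V such that every vertex of G lies on some walk from s to t. If for every natural number ℓ there is at most one walk of length ℓ from s to t (i.e., the underlying unary automaton is unambiguous), then |E| ≤ 12·|V|. -/
section helpers

variable {V : Type*} {E : Set (V × V)} {x y u v : V}

lemma IsWalk.ne_nil {l : List V} (h : IsWalk E x y l) : l ≠ [] := by
  rintro rfl; simp [IsWalk] at h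

lemma IsWalk.length_pos {l : List V} (h : IsWalk E x y l) : 0 < l.length :=
  List.length_pos_iff.mpr h.ne_nil

lemma IsWalk.getElem_last {l : List V} (h : IsWalk E x y l) (hl : l.length - 1 < l.length) :
    l[l.length - 1] = y := by
  have h2 := h.2.1
  rw [List.getLast?_eq_getLast_of_ne_nil h.ne_nil, List.getLast_eq_getElem] at h2
  exact Option.some.inj h2

/-- concatenating a walk to `u`, an edge `(u,v)`, and a walk from `v`. -/
lemma isWalk_append_edge {P Q : List V} (h1 : IsWalk E x u P) (h2 : IsWalk E v y Q)
    (he : (u, v) ∈ E) : IsWalk E x y (P ++ Q) := by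
  obtain ⟨h1h, h1l, h1c⟩ := h1
  obtain ⟨h2h, h2l, h2c⟩ := h2
  have hPne : P ≠ [] := by rintro rfl; simp at h1h
  have hQne : Q ≠ [] := by rintro rfl; simp at h2h
  refine ⟨?_, ?_, ?_⟩
  · rw [List.head?_append_of_ne_nil _ hPne]; exact h1h
  · rw [List.getLast?_append_of_ne_nil _ hQne]; exact h2l
  · unfold List.Chain'; rw [List.isChain_append]
    refine ⟨h1c, h2c, ?_⟩
    intro a ha b hb
    rw [h1l] at ha; rw [h2h] at hb
    obtain rfl : u = a := by simpa using ha
    obtain rfl : v = b := by simpa using hb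
    exact he

/-- concatenating two walks sharing the middle vertex. -/
lemma isWalk_trans {P Q : List V} (h1 : IsWalk E x y P) (h2 : IsWalk E y u Q) :
    IsWalk E x u (P ++ Q.tail) := by
  obtain ⟨h2h, h2l, h2c⟩ := h2
  cases Q with
  | nil => simp at h2h
  | cons q Q' =>
    have hq : q = y := by simpa using h2h
    simp only [List.tail_cons]
    cases Q' with
    | nil =>
      have hu : q = u := by simpa using h2l
      have : y = u := hq ▸ hu
      simpa using this ▸ h1
    | cons q1 Q'' =>
      obtain ⟨h1h, h1l, h1c⟩ := h1
      have hPne : P ≠ [] := by rintro rfl; simp at h1h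
      refine ⟨?_, ?_, ?_⟩
      · rw [List.head?_append_of_ne_nil _ hPne]; exact h1h
      · rw [List.getLast?_append_of_ne_nil _ (by simp : (q1 :: Q'') ≠ [])]
        simpa using h2l
      · unfold List.Chain'; rw [List.isChain_append]
        refine ⟨h1c, (List.isChain_cons_cons.mp h2c).2, ?_⟩
        intro a ha b hb
        rw [h1l] at ha
        obtain rfl : y = a := by simpa using ha
        obtain rfl : q1 = b := by simpa using hb
        exact hq ▸ (List.isChain_cons_cons.mp h2c).1

lemma isWalk_take {l : List V} (h : IsWalk E x y l) {d : ℕ} (hd : d < l.length) :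
    IsWalk E x l[d] (l.take (d + 1)) := by
  obtain ⟨hh, hl, hc⟩ := h
  refine ⟨?_, ?_, hc.take _⟩
  · cases l with
    | nil => simp at hh
    | cons p l' => simpa [List.take_succ_cons] using hh
  · rw [List.take_succ, List.getElem?_eq_getElem hd]
    rw [Option.toList_some, List.getLast?_concat]

lemma isWalk_drop {l : List V} (h : IsWalk E x y l) {d : ℕ} (hd : d < l.length) :
    IsWalk E l[d] y (l.drop d) := by
  obtain ⟨hh, hl, hc⟩ := h
  refine ⟨?_, ?_, hc.drop _⟩
  · rw [List.head?_drop, List.getElem?_eq_getElem hd]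
  · have hne : l.drop d ≠ [] := by
      intro hcon
      have := congrArg List.length hcon
      simp at this; omega
    have h2 : ((l.take d) ++ l.drop d).getLast? = (l.drop d).getLast? :=
      List.getLast?_append_of_ne_nil _ hne
    rw [List.take_append_drop] at h2
    rw [← h2]; exact hl

lemma exists_nodup_walk (h : ∃ l, IsWalk E x y l) : ∃ l, IsWalk E x y l ∧ l.Nodup := by
  obtain ⟨l0, hl0⟩ := h
  have main : ∀ N, ∀ l : List V, l.length ≤ N → IsWalk E x y l →
      ∃ l', IsWalk E x y l' ∧ l'.Nodup := by
    intro N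
    induction N with
    | zero => intro l hlen hw; exact absurd hw.length_pos (by omega)
    | succ N ih =>
      intro l hlen hw
      by_cases hnd : l.Nodup
      · exact ⟨l, hw, hnd⟩
      · rw [List.nodup_iff_getElem?_ne_getElem?] at hnd
        push_neg at hnd
        obtain ⟨i, j, hij, hj, heq⟩ := hnd
        have hi : i < l.length := lt_trans hij hj
        rw [List.getElem?_eq_getElem hi, List.getElem?_eq_getElem hj] at heq
        have heq' : l[i] = l[j] := by simpa using heq
        have w1 : IsWalk E x l[i] (l.take (i + 1)) := isWalk_take hw hi
        have w2 : IsWalk E l[i] y (l.drop j) := heq' ▸ isWalk_drop hw hj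
        have w3 : IsWalk E x y (l.take (i + 1) ++ (l.drop j).tail) := isWalk_trans w1 w2
        refine ih _ ?_ w3
        have hlen3 : (l.take (i + 1) ++ (l.drop j).tail).length
            = (i + 1) + (l.length - j - 1) := by
          simp [List.length_take, List.length_drop]; omega
        omega
  exact main l0.length l0 le_rfl hl0

end helpers

/-- Let `G = (V, E)` be a directed graph with distinguished vertices
`s, t` such that every vertex lies on some walk from `s` to `t`. If for every `ℓ` there is
at most one walk of length `ℓ` from `s` to `t` (the underlying unary automaton is
unambiguous), then `|E| ≤ 12·|V|`. -/
theorem card_edges_le_of_unambiguous {V : Type*} [Fintype V] (E : Finset (V × V)) (s t : V)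
    (htrim : ∀ v : V, ∃ l : List V, IsWalk (↑E : Set (V × V)) s t l ∧ v ∈ l)
    (hunamb : ∀ l₁ l₂ : List V, IsWalk (↑E : Set (V × V)) s t l₁ →
      IsWalk (↑E : Set (V × V)) s t l₂ → l₁.length = l₂.length → l₁ = l₂) :
    E.card ≤ 12 * Fintype.card V := by
  classical
  set E' : Set (V × V) := (↑E : Set (V × V)) with hE'
  set n := Fintype.card V with hn
  -- every vertex is reachable from `s` and co-reachable from `t`
  have hsplit : ∀ w : V, (∃ l, IsWalk E' s w l) ∧ (∃ l, IsWalk E' w t l) := by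
    intro w
    obtain ⟨l, hl, hmem⟩ := htrim w
    obtain ⟨d, hd, hw⟩ := List.mem_iff_getElem.mp hmem
    subst hw
    exact ⟨⟨_, isWalk_take hl hd⟩, ⟨_, isWalk_drop hl hd⟩⟩
  have haS : ∀ w : V, ∃ k : ℕ, ∃ l, IsWalk E' s w l ∧ l.length = k + 1 := by
    intro w; obtain ⟨l, hl⟩ := (hsplit w).1
    exact ⟨l.length - 1, l, hl, by have := hl.length_pos; omega⟩
  have hbS : ∀ w : V, ∃ k : ℕ, ∃ l, IsWalk E' w t l ∧ l.length = k + 1 := by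
    intro w; obtain ⟨l, hl⟩ := (hsplit w).2
    exact ⟨l.length - 1, l, hl, by have := hl.length_pos; omega⟩
  -- `a w` : length of a shortest walk `s → w`; `b w` : length of a shortest walk `w → t`
  let a : V → ℕ := fun w => sInf {k | ∃ l, IsWalk E' s w l ∧ l.length = k + 1}
  let b : V → ℕ := fun w => sInf {k | ∃ l, IsWalk E' w t l ∧ l.length = k + 1}
  have haMem : ∀ w, ∃ l, IsWalk E' s w l ∧ l.length = a w + 1 := fun w => Nat.sInf_mem (haS w)
  have hbMem : ∀ w, ∃ l, IsWalk E' w t l ∧ l.length = b w + 1 := fun w => Nat.sInf_mem (hbS w)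
  have haLe : ∀ w k, (∃ l, IsWalk E' s w l ∧ l.length = k + 1) → a w ≤ k :=
    fun w k hk => Nat.sInf_le hk
  have hbLe : ∀ w k, (∃ l, IsWalk E' w t l ∧ l.length = k + 1) → b w ≤ k :=
    fun w k hk => Nat.sInf_le hk
  choose P hP hPlen using haMem
  choose Q hQ hQlen using hbMem
  have haBound : ∀ w, a w + 1 ≤ n := by
    intro w
    obtain ⟨l, hl, hnd⟩ := exists_nodup_walk (hsplit w).1
    have h1 : l.length ≤ n := hnd.length_le_card
    have h0 := hl.length_pos
    have h2 : a w ≤ l.length - 1 := haLe w _ ⟨l, hl, by omega⟩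
    omega
  have hbBound : ∀ w, b w + 1 ≤ n := by
    intro w
    obtain ⟨l, hl, hnd⟩ := exists_nodup_walk (hsplit w).2
    have h1 : l.length ≤ n := hnd.length_le_card
    have h0 := hl.length_pos
    have h2 : b w ≤ l.length - 1 := hbLe w _ ⟨l, hl, by omega⟩
    omega
  -- the canonical walk through an edge
  have hMw : ∀ e ∈ E, IsWalk E' s t (P e.1 ++ Q e.2) := by
    intro e he
    refine isWalk_append_edge (hP e.1) (hQ e.2) ?_
    show (e.1, e.2) ∈ E'
    rw [hE']
    simpa using he
  have hMlen : ∀ e : V × V, (P e.1 ++ Q e.2).length = a e.1 + b e.2 + 2 := by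
    intro e
    rw [List.length_append, hPlen e.1, hQlen e.2]
    omega
  have hMeq : ∀ e ∈ E, ∀ e' ∈ E, a e.1 + b e.2 = a e'.1 + b e'.2 →
      P e.1 ++ Q e.2 = P e'.1 ++ Q e'.2 := by
    intro e he e' he' hsum
    exact hunamb _ _ (hMw e he) (hMw e' he') (by rw [hMlen, hMlen]; omega)
  -- injectivity of `e ↦ (a e.1, b e.2)`
  have key : ∀ e ∈ E, ∀ e' ∈ E, a e.1 = a e'.1 → b e.2 = b e'.2 → e = e' := by
    intro e he e' he' h1 h2
    have heq := hMeq e he e' he' (by omega)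
    have hlenP : (P e.1).length = (P e'.1).length := by rw [hPlen, hPlen, h1]
    obtain ⟨hPeq, hQeq⟩ := List.append_inj heq hlenP
    have hu : e.1 = e'.1 := by
      have g1 := (hP e.1).2.1
      have g2 := (hP e'.1).2.1
      rw [hPeq, g2] at g1
      exact (Option.some.inj g1).symm
    have hv : e.2 = e'.2 := by
      have g1 := (hQ e.2).1
      have g2 := (hQ e'.2).1
      rw [hQeq, g2] at g1
      exact (Option.some.inj g1).symm
    exact Prod.ext hu hv
  -- the key structural fact for non-leader edges
  have key2 : ∀ e ∈ E, ∀ e' ∈ E, a e.1 + b e.2 = a e'.1 + b e'.2 → a e'.1 < a e.1 →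
      b e.1 = b e.2 + 1 := by
    intro e he e' he' hsum hlt
    have heq := hMeq e he e' he' hsum
    set d := a e.1 - a e'.1 - 1 with hd
    have hPl : (P e.1).length = a e.1 + 1 := hPlen e.1
    have hP'l : (P e'.1).length = a e'.1 + 1 := hPlen e'.1
    have hQ'l : (Q e'.2).length = b e'.2 + 1 := hQlen e'.2
    have hQd : d < (Q e'.2).length := by omega
    have hiP : a e.1 < (P e.1).length := by omega
    -- the vertex at position `a e.1` in the common walk is `e.1`, and also `(Q e'.2)[d]`
    have hxP : (P e.1)[a e.1]? = some e.1 := by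
      have hx := (hP e.1).getElem_last (by omega)
      have hx2 : (P e.1)[(P e.1).length - 1]? = some e.1 := by
        rw [List.getElem?_eq_getElem (by omega)]
        exact congrArg some hx
      rw [hPl] at hx2
      simpa using hx2
    have hL1 : (P e.1 ++ Q e.2)[a e.1]? = some e.1 := by
      rw [List.getElem?_append_left hiP]
      exact hxP
    have hL2 : (P e'.1 ++ Q e'.2)[a e.1]? = (Q e'.2)[d]? := by
      rw [List.getElem?_append_right (by omega : (P e'.1).length ≤ a e.1), hP'l]
      have : a e.1 - (a e'.1 + 1) = d := by omega
      rw [this]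
    have hQdval : (Q e'.2)[d]? = some e.1 := by rw [← hL2, ← heq, hL1]
    have hQdv : (Q e'.2)[d] = e.1 := by
      rw [List.getElem?_eq_getElem hQd] at hQdval
      exact Option.some.inj hQdval
    -- upper bound for `b e.1`
    have wA : IsWalk E' e.1 t ((Q e'.2).drop d) := hQdv ▸ isWalk_drop (hQ e'.2) hQd
    have lA : ((Q e'.2).drop d).length = (b e'.2 - d) + 1 := by
      rw [List.length_drop, hQ'l]; omega
    have ineqA : b e.1 ≤ b e'.2 - d := hbLe _ _ ⟨_, wA, lA⟩
    -- lower bound for `b e.1`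
    have wtake : IsWalk E' e'.2 e.1 ((Q e'.2).take (d + 1)) := hQdv ▸ isWalk_take (hQ e'.2) hQd
    have wB : IsWalk E' e'.2 t ((Q e'.2).take (d + 1) ++ (Q e.1).tail) :=
      isWalk_trans wtake (hQ e.1)
    have lB : ((Q e'.2).take (d + 1) ++ (Q e.1).tail).length = (d + b e.1) + 1 := by
      rw [List.length_append, List.length_take, List.length_tail, hQ'l, hQlen]
      omega
    have ineqB : b e'.2 ≤ d + b e.1 := hbLe _ _ ⟨_, wB, lB⟩
    omega
  -- the injection into `Fin (2n) ⊕ V`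
  let leader : V × V → Prop := fun e => ∀ e' ∈ E, a e'.1 + b e'.2 = a e.1 + b e.2 → a e.1 ≤ a e'.1
  let F : V × V → ℕ ⊕ V := fun e => if leader e then Sum.inl (a e.1 + b e.2) else Sum.inr e.1
  have hmaps : ∀ e ∈ E, F e ∈ (Finset.range (2 * n)).disjSum (Finset.univ : Finset V) := by
    intro e he
    by_cases hld : leader e
    · have h1 := haBound e.1
      have h2 := hbBound e.2
      simp only [F, if_pos hld]
      exact Finset.inl_mem_disjSum.mpr (Finset.mem_range.mpr (by omega))
    · simp only [F, if_neg hld]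
      exact Finset.inr_mem_disjSum.mpr (Finset.mem_univ _)
  have hinj : Set.InjOn F ↑E := by
    intro e1 he1' e2 he2' hF
    have he1 : e1 ∈ E := by simpa using he1'
    have he2 : e2 ∈ E := by simpa using he2'
    simp only [F] at hF
    by_cases h1 : leader e1 <;> by_cases h2 : leader e2
    · -- both leaders
      rw [if_pos h1, if_pos h2] at hF
      have hsum : a e1.1 + b e1.2 = a e2.1 + b e2.2 := Sum.inl.inj hF
      have ha12 : a e1.1 ≤ a e2.1 := h1 e2 he2 hsum.symm
      have ha21 : a e2.1 ≤ a e1.1 := h2 e1 he1 hsum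
      exact key e1 he1 e2 he2 (by omega) (by omega)
    · rw [if_pos h1, if_neg h2] at hF
      exact absurd hF (by simp)
    · rw [if_neg h1, if_pos h2] at hF
      exact absurd hF (by simp)
    · -- both non-leaders
      rw [if_neg h1, if_neg h2] at hF
      have hw : e1.1 = e2.1 := Sum.inr.inj hF
      simp only [leader, not_forall] at h1 h2
      obtain ⟨f1, hf1E, hf1L, hf1lt⟩ := h1
      obtain ⟨f2, hf2E, hf2L, hf2lt⟩ := h2
      have hb1 : b e1.1 = b e1.2 + 1 := key2 e1 he1 f1 hf1E hf1L.symm (by omega)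
      have hb2 : b e2.1 = b e2.2 + 1 := key2 e2 he2 f2 hf2E hf2L.symm (by omega)
      have : b e1.2 = b e2.2 := by rw [hw] at hb1; omega
      refine key e1 he1 e2 he2 (by rw [hw]) this
  have hcard := Finset.card_le_card_of_injOn F hmaps hinj
  rw [Finset.card_disjSum, Finset.card_range, Finset.card_univ] at hcard
  omega
end

section
/- Let G = (V, E) be a directed graph and let v, w ∈ V be vertices such that there is a cycle through v, a cycle through w, a walk from v to w, and no walk from w to v (so v and w lie in different strongly connected components). Then there exist vertices p ≠ q, an integer ℓ > 0, a cycle of length ℓ at p, a walk of length ℓ from p to q, and a cycle of length ℓ at q; that is, G has the IDA property. -/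
def FWalk {V : Type*} (E : Set (V × V)) (n : ℕ) (f : ℕ → V) : Prop :=
  ∀ i < n, (f i, f (i+1)) ∈ E

lemma fwalk_toList {V : Type*} {E : Set (V × V)} {n : ℕ} {f : ℕ → V}
    (h : FWalk E n f) :
    IsWalk E (f 0) (f n) ((List.range (n+1)).map f) := by
  refine ⟨?_, ?_, ?_⟩
  · simp [List.range_succ_eq_map]
  · rw [List.getLast?_eq_getLast (by simp)]
    simp [List.getLast_eq_getElem]
  · rw [List.Chain', List.isChain_iff_getElem]
    intro i hi
    simp at hi
    simp only [List.getElem_map, List.getElem_range]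
    exact h i (by omega)

lemma fwalk_ofList {V : Type*} {E : Set (V × V)} {u v : V} {l : List V}
    (h : IsWalk E u v l) :
    ∃ f : ℕ → V, FWalk E (l.length - 1) f ∧ f 0 = u ∧ f (l.length - 1) = v := by
  obtain ⟨h1, h2, h3⟩ := h
  have hne : l ≠ [] := by rintro rfl; simp at h1
  have hlp : 0 < l.length := List.length_pos_iff.2 hne
  refine ⟨fun i => l.getD i u, ?_, ?_, ?_⟩
  · intro i hi
    rw [List.Chain', List.isChain_iff_getElem] at h3
    have := h3 i (by omega)
    show (l.getD i u, l.getD (i+1) u) ∈ E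
    rwa [List.getD_eq_getElem _ _ (by omega), List.getD_eq_getElem _ _ (by omega)]
  · show l.getD 0 u = u
    rw [List.getD_eq_getElem _ _ hlp]
    rw [List.head?_eq_head hne] at h1
    rw [show l[0] = l.head hne from (List.head_eq_getElem_zero hne).symm]
    exact Option.some.inj h1
  · show l.getD (l.length - 1) u = v
    rw [List.getD_eq_getElem _ _ (by omega)]
    rw [List.getLast?_eq_getLast hne] at h2
    rw [List.getLast_eq_getElem] at h2
    exact Option.some.inj h2

lemma periodic_edges {V : Type*} {E : Set (V × V)} {n : ℕ} {f : ℕ → V}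
    (hf : FWalk E n f) (hn : 0 < n) (hfn : f n = f 0) :
    ∀ i, (f (i % n), f ((i+1) % n)) ∈ E := by
  intro i
  have hr : i % n < n := Nat.mod_lt _ hn
  have he := hf (i % n) hr
  have hm : (i+1) % n = (i % n + 1) % n :=
    (((Nat.mod_modEq i n).add_right 1)).symm
  by_cases h : i % n + 1 = n
  · rw [h] at he
    rw [hfn] at he
    rw [hm, h, Nat.mod_self]
    exact he
  · rw [hm, show (i % n + 1) % n = i % n + 1 from Nat.mod_eq_of_lt (by omega)]
    exact he

/-- Let `G = (V, E)` be a directed graph and `v, w` vertices such that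
there is a cycle through `v`, a cycle through `w`, a walk from `v` to `w`, and no walk from
`w` to `v`. Then `G` has the IDA property: there are vertices `p ≠ q`, an `ℓ > 0`, a cycle
of length `ℓ` at `p`, a walk of length `ℓ` from `p` to `q`, and a cycle of length `ℓ`
at `q`. -/
theorem ida_of_walk_between_components {V : Type*} [Fintype V] (E : Set (V × V)) (v w : V)
    (hcv : ∃ c : List V, IsWalk E v v c ∧ 2 ≤ c.length)
    (hcw : ∃ c : List V, IsWalk E w w c ∧ 2 ≤ c.length)
    (hvw : ∃ l : List V, IsWalk E v w l)
    (hwv : ¬ ∃ l : List V, IsWalk E w v l) :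
    ∃ (p q : V) (ℓ : ℕ), p ≠ q ∧ 0 < ℓ ∧
      (∃ c : List V, IsWalk E p p c ∧ c.length = ℓ + 1) ∧
      (∃ l : List V, IsWalk E p q l ∧ l.length = ℓ + 1) ∧
      (∃ c : List V, IsWalk E q q c ∧ c.length = ℓ + 1) := by
  obtain ⟨cv, hcv, hcvlen⟩ := hcv
  obtain ⟨cw, hcw, hcwlen⟩ := hcw
  obtain ⟨lp, hlp⟩ := hvw
  obtain ⟨fv, hfv, hfv0, hfva⟩ := fwalk_ofList hcv
  obtain ⟨fw, hfw, hfw0, hfwb⟩ := fwalk_ofList hcw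
  obtain ⟨fp, hfp, hfp0, hfpm⟩ := fwalk_ofList hlp
  set a := cv.length - 1 with ha
  set b := cw.length - 1 with hb
  set m := lp.length - 1 with hmdef
  have hapos : 0 < a := by omega
  have hbpos : 0 < b := by omega
  -- v ≠ w
  have hvne : v ≠ w := by
    rintro rfl
    exact hwv ⟨lp, hlp⟩
  have hmpos : 0 < m := by
    rcases Nat.eq_zero_or_pos m with h | h
    · exact absurd (hfp0.symm.trans (h ▸ hfpm)) hvne
    · exact h
  set ℓ := a * b * (m + 1) with hℓ
  have hℓpos : 0 < ℓ := by positivity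
  have hab : 0 < a * b := Nat.mul_pos hapos hbpos
  have hℓm : m < ℓ := by
    have : m + 1 ≤ a * b * (m + 1) := Nat.le_mul_of_pos_left _ hab
    omega
  have haℓ : ℓ % a = 0 := by
    rw [hℓ, Nat.mul_assoc, Nat.mul_mod_right]
  have hbℓ : ℓ % b = 0 := by
    rw [hℓ]
    rw [Nat.mul_comm a b, Nat.mul_assoc, Nat.mul_mod_right]
  have keyv := periodic_edges hfv hapos (hfva.trans hfv0.symm)
  have keyw := periodic_edges hfw hbpos (hfwb.trans hfw0.symm)
  -- the target vertex q
  set q := fw ((ℓ - m) % b) with hq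
  -- q is reachable from w, hence v ≠ q
  have hvq : v ≠ q := by
    intro hvq
    have hK : FWalk E (ℓ - m) (fun i => fw (i % b)) := fun i _ => keyw i
    have h2 := fwalk_toList hK
    simp only [Nat.zero_mod, hfw0] at h2
    rw [← hq, ← hvq] at h2
    exact hwv ⟨_, h2⟩
  refine ⟨v, q, ℓ, hvq, hℓpos, ?_, ?_, ?_⟩
  · -- cycle of length ℓ at v
    have hG : FWalk E ℓ (fun i => fv (i % a)) := fun i _ => keyv i
    have := fwalk_toList hG
    simp only [Nat.zero_mod, hfv0, haℓ] at this
    exact ⟨_, this, by simp⟩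
  · -- walk of length ℓ from v to q
    set F : ℕ → V := fun i => if i < m then fp i else fw ((i - m) % b) with hF
    have hFw : FWalk E ℓ F := by
      intro i _
      by_cases h1 : i + 1 < m
      · simp only [hF, if_pos (by omega : i < m), if_pos h1]
        exact hfp i (by omega)
      · by_cases h2 : i < m
        · have hieq : i + 1 = m := by omega
          simp only [hF, if_pos h2, if_neg (by omega : ¬ i + 1 < m)]
          have : fw ((i + 1 - m) % b) = fp (i+1) := by
            rw [hieq, Nat.sub_self, Nat.zero_mod, hfw0, ← hfpm]
          rw [this]
          exact hfp i (by omega)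
        · simp only [hF, if_neg h2, if_neg (by omega : ¬ i + 1 < m)]
          have : i + 1 - m = (i - m) + 1 := by omega
          rw [this]
          exact keyw (i - m)
    have := fwalk_toList hFw
    have hF0 : F 0 = v := by simp only [hF, if_pos hmpos]; exact hfp0
    have hFℓ : F ℓ = q := by simp only [hF, if_neg (by omega : ¬ ℓ < m)]; rfl
    rw [hF0, hFℓ] at this
    exact ⟨_, this, by simp⟩
  · -- cycle of length ℓ at q
    have hH : FWalk E ℓ (fun i => fw ((i + (ℓ - m)) % b)) := by
      intro i _
      show (fw ((i + (ℓ - m)) % b), fw ((i + 1 + (ℓ - m)) % b)) ∈ E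
      have h3 : i + 1 + (ℓ - m) = (i + (ℓ - m)) + 1 := by omega
      rw [h3]
      exact keyw (i + (ℓ - m))
    have := fwalk_toList hH
    simp only [Nat.zero_add] at this
    have hHℓ : (ℓ + (ℓ - m)) % b = (ℓ - m) % b := by
      rw [Nat.add_mod, hbℓ, Nat.zero_add, Nat.mod_mod]
    rw [hHℓ] at this
    exact ⟨_, this, by simp⟩
end

section
/- Let A = (Q, Σ, δ, {q_I}, {q_F}) be an NFA with a unique initial state q_I and a unique accepting state q_F which is trim, i.e., every state of A lies on some accepting run (equivalently, every state is reachable from q_I by some run and admits a run to q_F). Let # be a symbol not in Σ and let A' = (Q, Σ ∪ {#}, δ ∪ {(q_F, #, q_I)}, {q_I}, {q_F}). Then A' has the EDA property if and only if A is not unambiguous. -/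
/-- `IsRun δ w p q r` says that the list of states `r = [p₀, …, p_n]` is a run of the NFA
with transition relation `δ` on the word `w = [w₁, …, w_n]` from `p = p₀` to `q = p_n`:
it has length `n + 1` and `(p_{i-1}, w_i, p_i) ∈ δ` for all `i`. -/
def IsRun {Q A : Type*} (δ : Set (Q × A × Q)) (w : List A) (p q : Q) (r : List Q) : Prop :=
  r.length = w.length + 1 ∧ r.head? = some p ∧ r.getLast? = some q ∧
    ∀ tr ∈ r.zip (w.zip r.tail), tr ∈ δ

section AuxLemmas
variable {Q A : Type*} {δ : Set (Q × A × Q)}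

lemma isRun_nil_iff {p q : Q} {r : List Q} :
    IsRun δ [] p q r ↔ p = q ∧ r = [p] := by
  constructor
  · rintro ⟨hl, hh, hlast, -⟩
    obtain ⟨x, rfl⟩ := List.length_eq_one_iff.mp (by simpa using hl)
    simp only [List.head?_cons, Option.some.injEq] at hh
    simp only [List.getLast?_singleton, Option.some.injEq] at hlast
    subst hh; subst hlast; exact ⟨rfl, rfl⟩
  · rintro ⟨rfl, rfl⟩
    exact ⟨rfl, rfl, rfl, by simp⟩

lemma isRun_cons_iff {a : A} {w : List A} {p q : Q} {r : List Q} :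
    IsRun δ (a :: w) p q r ↔
      ∃ p' r', r = p :: p' :: r' ∧ (p, a, p') ∈ δ ∧ IsRun δ w p' q (p' :: r') := by
  constructor
  · rintro ⟨hl, hh, hlast, hz⟩
    match r, hl with
    | x :: y :: r', hl =>
      simp only [List.head?_cons, Option.some.injEq] at hh
      subst hh
      rw [List.getLast?_cons_cons] at hlast
      simp only [List.tail_cons, List.zip_cons_cons, List.mem_cons, forall_eq_or_imp] at hz
      refine ⟨y, r', rfl, hz.1, by simpa using hl, rfl, hlast, ?_⟩
      intro tr htr
      exact hz.2 tr (by simpa using htr)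
  · rintro ⟨p', r', rfl, hmem, hl, -, hlast, hz⟩
    refine ⟨by simpa using hl, rfl, by rwa [List.getLast?_cons_cons], ?_⟩
    simp only [List.tail_cons, List.zip_cons_cons, List.mem_cons, forall_eq_or_imp]
    exact ⟨hmem, fun tr htr => hz tr (by simpa using htr)⟩

lemma isRun_head_eq {w : List A} {p q : Q} {r : List Q} (h : IsRun δ w p q r) :
    r = p :: r.tail := by
  obtain ⟨-, hh, -, -⟩ := h
  cases r with
  | nil => simp at hh
  | cons x t => simp only [List.head?_cons, Option.some.injEq] at hh; rw [hh]; rfl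

lemma isRun_length {w : List A} {p q : Q} {r : List Q} (h : IsRun δ w p q r) :
    r.length = w.length + 1 := h.1

lemma isRun_append {u v : List A} {p q s : Q} {r r' : List Q}
    (h1 : IsRun δ u p q r) (h2 : IsRun δ v q s r') :
    IsRun δ (u ++ v) p s (r ++ r'.tail) := by
  induction u generalizing p r with
  | nil =>
    obtain ⟨rfl, rfl⟩ := isRun_nil_iff.mp h1
    have := isRun_head_eq h2
    simpa [← this] using h2
  | cons a u ih =>
    obtain ⟨p', r'', rfl, hmem, hrun⟩ := isRun_cons_iff.mp h1
    exact isRun_cons_iff.mpr ⟨p', r'' ++ r'.tail, rfl, hmem, ih hrun⟩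

lemma list_decomp (v : List (A ⊕ Unit)) :
    (∃ w : List A, v = w.map Sum.inl) ∨
    (∃ (w : List A) (rest : List (A ⊕ Unit)), v = w.map Sum.inl ++ Sum.inr () :: rest) := by
  induction v with
  | nil => exact Or.inl ⟨[], rfl⟩
  | cons a v ih =>
    cases a with
    | inl σ =>
      rcases ih with ⟨w, rfl⟩ | ⟨w, rest, rfl⟩
      · exact Or.inl ⟨σ :: w, rfl⟩
      · exact Or.inr ⟨σ :: w, rest, rfl⟩
    | inr u => cases u; exact Or.inr ⟨[], v, rfl⟩

end AuxLemmas

section Primed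
variable {Q A : Type*} {δ : Set (Q × A × Q)} {qI qF : Q} {δ' : Set (Q × (A ⊕ Unit) × Q)}
  (hδ' : δ' = {tr | (∃ p σ q, (p, σ, q) ∈ δ ∧ tr = (p, Sum.inl σ, q)) ∨
                    tr = (qF, Sum.inr (), qI)})
include hδ'

lemma mem_inl_iff {p p' : Q} {σ : A} : (p, Sum.inl σ, p') ∈ δ' ↔ (p, σ, p') ∈ δ := by
  subst hδ'
  simp only [Set.mem_setOf_eq, Prod.mk.injEq]
  constructor
  · rintro (⟨a, b, c, hm, rfl, h2, rfl⟩ | ⟨-, h, -⟩)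
    · obtain rfl := Sum.inl.injEq .. ▸ h2
      exact hm
    · exact absurd h (by simp)
  · intro hm
    exact Or.inl ⟨p, σ, p', hm, rfl, rfl, rfl⟩

lemma mem_inr_iff {p p' : Q} : (p, Sum.inr (), p') ∈ δ' ↔ p = qF ∧ p' = qI := by
  subst hδ'
  simp only [Set.mem_setOf_eq, Prod.mk.injEq]
  constructor
  · rintro (⟨a, b, c, hm, rfl, h2, rfl⟩ | ⟨h1, -, h3⟩)
    · exact absurd h2 (by simp)
    · exact ⟨h1, h3⟩
  · rintro ⟨rfl, rfl⟩
    exact Or.inr (by simp)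

lemma isRun_lift {w : List A} {p q : Q} {r : List Q} (h : IsRun δ w p q r) :
    IsRun δ' (w.map Sum.inl) p q r := by
  induction w generalizing p r with
  | nil =>
    obtain ⟨rfl, rfl⟩ := isRun_nil_iff.mp h
    exact isRun_nil_iff.mpr ⟨rfl, rfl⟩
  | cons a w ih =>
    obtain ⟨p', r', rfl, hmem, hrun⟩ := isRun_cons_iff.mp h
    exact isRun_cons_iff.mpr ⟨p', r', rfl, (mem_inl_iff hδ').mpr hmem, ih hrun⟩

lemma isRun_proj {w : List A} {p q : Q} {r : List Q} (h : IsRun δ' (w.map Sum.inl) p q r) :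
    IsRun δ w p q r := by
  induction w generalizing p r with
  | nil =>
    obtain ⟨rfl, rfl⟩ := isRun_nil_iff.mp h
    exact isRun_nil_iff.mpr ⟨rfl, rfl⟩
  | cons a w ih =>
    obtain ⟨p', r', rfl, hmem, hrun⟩ := isRun_cons_iff.mp h
    exact isRun_cons_iff.mpr ⟨p', r', rfl, (mem_inl_iff hδ').mp hmem, ih hrun⟩

lemma isRun_prefix {w : List A} {rest : List (A ⊕ Unit)} {p s : Q} {r : List Q}
    (h : IsRun δ' (w.map Sum.inl ++ Sum.inr () :: rest) p s r) :
    ∃ ρ, IsRun δ w p qF ρ := by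
  induction w generalizing p r with
  | nil =>
    simp only [List.map_nil, List.nil_append] at h
    obtain ⟨p', r', -, hmem, -⟩ := isRun_cons_iff.mp h
    obtain ⟨rfl, -⟩ := (mem_inr_iff hδ').mp hmem
    exact ⟨[p], isRun_nil_iff.mpr ⟨rfl, rfl⟩⟩
  | cons a w ih =>
    simp only [List.map_cons, List.cons_append] at h
    obtain ⟨p', r', -, hmem, hrun⟩ := isRun_cons_iff.mp h
    obtain ⟨ρ, hρ⟩ := ih hrun
    have hcons := isRun_head_eq hρ
    exact ⟨p :: ρ, isRun_cons_iff.mpr ⟨p', ρ.tail, by rw [← hcons],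
      (mem_inl_iff hδ').mp hmem, hcons ▸ hρ⟩⟩

lemma extract_ambiguous :
    ∀ (v : List (A ⊕ Unit)) (p s : Q) (r₁ r₂ : List Q),
      IsRun δ' v p s r₁ → IsRun δ' v p s r₂ → r₁ ≠ r₂ →
      ∃ (w : List A) (x y : Q) (ρ₁ ρ₂ : List Q),
        IsRun δ w x y ρ₁ ∧ IsRun δ w x y ρ₂ ∧ ρ₁ ≠ ρ₂ := by
  intro v
  induction v with
  | nil =>
    intro p s r₁ r₂ h1 h2 hne
    obtain ⟨-, rfl⟩ := isRun_nil_iff.mp h1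
    obtain ⟨-, rfl⟩ := isRun_nil_iff.mp h2
    exact absurd rfl hne
  | cons a v ih =>
    intro p s r₁ r₂ h1 h2 hne
    obtain ⟨p₁, t₁, rfl, hm₁, hr₁⟩ := isRun_cons_iff.mp h1
    obtain ⟨p₂, t₂, rfl, hm₂, hr₂⟩ := isRun_cons_iff.mp h2
    cases a with
    | inr u =>
      cases u
      obtain ⟨rfl, rfl⟩ := (mem_inr_iff hδ').mp hm₁
      obtain ⟨-, rfl⟩ := (mem_inr_iff hδ').mp hm₂
      exact ih _ _ _ _ hr₁ hr₂ (fun h => hne (by rw [h]))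
    | inl σ =>
      have hm₁' := (mem_inl_iff hδ').mp hm₁
      have hm₂' := (mem_inl_iff hδ').mp hm₂
      by_cases hpe : p₁ = p₂
      · subst hpe
        exact ih _ _ _ _ hr₁ hr₂ (fun h => hne (by rw [h]))
      · rcases list_decomp v with ⟨w, rfl⟩ | ⟨w, rest, rfl⟩
        · refine ⟨σ :: w, p, s, p :: p₁ :: t₁, p :: p₂ :: t₂,
            isRun_cons_iff.mpr ⟨p₁, t₁, rfl, hm₁', isRun_proj hδ' hr₁⟩,
            isRun_cons_iff.mpr ⟨p₂, t₂, rfl, hm₂', isRun_proj hδ' hr₂⟩, ?_⟩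
          intro h
          simp only [List.cons.injEq] at h
          exact hpe h.2.1
        · obtain ⟨ρ₁, hρ₁⟩ := isRun_prefix hδ' hr₁
          obtain ⟨ρ₂, hρ₂⟩ := isRun_prefix hδ' hr₂
          have hc₁ := isRun_head_eq hρ₁
          have hc₂ := isRun_head_eq hρ₂
          refine ⟨σ :: w, p, qF, p :: ρ₁, p :: ρ₂,
            isRun_cons_iff.mpr ⟨p₁, ρ₁.tail, by rw [← hc₁], hm₁', hc₁ ▸ hρ₁⟩,
            isRun_cons_iff.mpr ⟨p₂, ρ₂.tail, by rw [← hc₂], hm₂', hc₂ ▸ hρ₂⟩, ?_⟩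
          intro h
          simp only [List.cons.injEq, true_and] at h
          rw [hc₁, hc₂] at h
          injection h with h1 h2
          exact hpe h1

end Primed

/-- Let `A = (Q, Σ, δ, {q_I}, {q_F})` be a trim NFA with a unique initial
state and a unique accepting state. Extend the alphabet with a fresh symbol `#`
(modelled as `Sum.inr ()`) and add the transition `(q_F, #, q_I)`, obtaining `A'`. Then
`A'` has the EDA property (some state has two distinct cycles on the same nonempty word)
if and only if `A` is not unambiguous. -/
theorem eda_iff_not_unambiguous {Q A : Type*} [Fintype Q]
    (δ : Set (Q × A × Q)) (qI qF : Q)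
    (htrim : ∀ p : Q, (∃ (u : List A) (r : List Q), IsRun δ u qI p r) ∧
                      (∃ (v : List A) (r : List Q), IsRun δ v p qF r))
    (δ' : Set (Q × (A ⊕ Unit) × Q))
    (hδ' : δ' = {tr | (∃ p σ q, (p, σ, q) ∈ δ ∧ tr = (p, Sum.inl σ, q)) ∨
                      tr = (qF, Sum.inr (), qI)}) :
    (∃ (q : Q) (v : List (A ⊕ Unit)) (r₁ r₂ : List Q),
        v ≠ [] ∧ IsRun δ' v q q r₁ ∧ IsRun δ' v q q r₂ ∧ r₁ ≠ r₂) ↔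
      ¬ (∀ (w : List A) (r₁ r₂ : List Q),
          IsRun δ w qI qF r₁ → IsRun δ w qI qF r₂ → r₁ = r₂) := by
  constructor
  · rintro ⟨q, v, r₁, r₂, -, h1, h2, hne⟩ hun
    obtain ⟨w, x, y, ρ₁, ρ₂, hρ₁, hρ₂, hρne⟩ := extract_ambiguous hδ' v q q r₁ r₂ h1 h2 hne
    obtain ⟨u, ru, hu⟩ := (htrim x).1
    obtain ⟨z, rz, hz⟩ := (htrim y).2
    have full₁ := isRun_append hu (isRun_append hρ₁ hz)
    have full₂ := isRun_append hu (isRun_append hρ₂ hz)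
    have heq := hun _ _ _ full₁ full₂
    have heq2 := List.append_cancel_left heq
    have hc₁ := isRun_head_eq hρ₁
    have hc₂ := isRun_head_eq hρ₂
    rw [hc₁, hc₂] at heq2
    simp only [List.cons_append, List.tail_cons] at heq2
    have hlen : ρ₁.tail.length = ρ₂.tail.length := by
      have l1 := isRun_length hρ₁
      have l2 := isRun_length hρ₂
      rw [hc₁] at l1; rw [hc₂] at l2
      simp only [List.length_cons] at l1 l2
      omega
    obtain ⟨hta, -⟩ := List.append_inj heq2 (by omega)
    exact hρne (by rw [hc₁, hc₂, hta])
  · intro hnamb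
    push_neg at hnamb
    obtain ⟨w, r₁, r₂, h1, h2, hne⟩ := hnamb
    have hstep : IsRun δ' [Sum.inr ()] qF qI [qF, qI] :=
      isRun_cons_iff.mpr ⟨qI, [], rfl, (mem_inr_iff hδ').mpr ⟨rfl, rfl⟩,
        isRun_nil_iff.mpr ⟨rfl, rfl⟩⟩
    have hrun₁ := isRun_append (isRun_lift hδ' h1) hstep
    have hrun₂ := isRun_append (isRun_lift hδ' h2) hstep
    refine ⟨qI, w.map Sum.inl ++ [Sum.inr ()], r₁ ++ [qI], r₂ ++ [qI], by simp,
      hrun₁, hrun₂, ?_⟩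
    intro h
    have hlen : r₁.length = r₂.length := by
      rw [isRun_length h1, isRun_length h2]
    obtain ⟨hta, -⟩ := List.append_inj h hlen
    exact hne hta
end

section
/- Let D₁ = (Q₁, Σ, δ₁, q₁ᴵ, F₁), D₂ = (Q₂, Σ, δ₂, q₂ᴵ, F₂) and D₃ = (Q₃, Σ, δ₃, q₃ᴵ, F₃) be deterministic finite automata over the same alphabet Σ with total transition functions, and let $ and # be two distinct symbols not in Σ. Let s and t be two fresh states and let A be the NFA over Σ ∪ {$, #} with state set Q₁ ⊎ Q₂ ⊎ Q₃ ⊎ {s, t}, unique initial state s, unique accepting state t, and transition relation consisting of: all transitions of D₁, D₂ and D₃ (as relations on their own state copies), the transitions (s, $, q₁ᴵ), (s, $, q₂ᴵ) and (t, $, q₃ᴵ), the transitions (p, #, s) for every p ∈ F₁, and the transitions (p, #, t) for every p ∈ F₂ and every p ∈ F₃. Then A has the IDA property if and only if L(D₁) ∩ L(D₂) ∩ L(D₃) ≠ ∅. -/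
/-- A (total) DFA with transition function `δ` and initial state `qI` accepts a word `w`
if running `δ` from `qI` along `w` ends in an accepting state of `F`. -/
def DFAAccepts {Q A : Type*} (δ : Q × A → Q) (qI : Q) (F : Set Q) (w : List A) : Prop :=
  w.foldl (fun q a => δ (q, a)) qI ∈ F

/-- The copy of a `Q₁`-state in the state space `(Q₁ ⊕ Q₂ ⊕ Q₃) ⊕ Bool`. -/
def emb₁ {Q₁ Q₂ Q₃ : Type*} (p : Q₁) : (Q₁ ⊕ Q₂ ⊕ Q₃) ⊕ Bool := Sum.inl (Sum.inl p)

/-- The copy of a `Q₂`-state in the state space `(Q₁ ⊕ Q₂ ⊕ Q₃) ⊕ Bool`. -/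
def emb₂ {Q₁ Q₂ Q₃ : Type*} (p : Q₂) : (Q₁ ⊕ Q₂ ⊕ Q₃) ⊕ Bool := Sum.inl (Sum.inr (Sum.inl p))

/-- The copy of a `Q₃`-state in the state space `(Q₁ ⊕ Q₂ ⊕ Q₃) ⊕ Bool`. -/
def emb₃ {Q₁ Q₂ Q₃ : Type*} (p : Q₃) : (Q₁ ⊕ Q₂ ⊕ Q₃) ⊕ Bool := Sum.inl (Sum.inr (Sum.inr p))

inductive NRun {Q A : Type*} (δ : Set (Q × A × Q)) : List A → Q → Q → Prop
  | nil (p : Q) : NRun δ [] p p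
  | cons {p p' q : Q} {a : A} {w : List A} :
      (p, a, p') ∈ δ → NRun δ w p' q → NRun δ (a :: w) p q

theorem NRun.toIsRun {Q A : Type*} {δ : Set (Q × A × Q)} {w p q} (h : NRun δ w p q) :
    ∃ r, IsRun δ w p q r := by
  induction h with
  | nil p => exact ⟨[p], rfl, rfl, rfl, by simp⟩
  | cons hstep htail ih =>
      obtain ⟨r, hlen, hhead, hlast, hmem⟩ := ih
      rcases r with _ | ⟨x, r⟩
      · simp at hhead
      · simp only [List.head?_cons, Option.some.injEq] at hhead
        subst hhead
        refine ⟨_ :: _ :: r, by simpa using hlen, rfl, by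
          rw [List.getLast?_cons_cons]; exact hlast, ?_⟩
        intro tr htr
        simp only [List.zip_cons_cons, List.tail_cons, List.mem_cons] at htr
        rcases htr with rfl | htr
        · exact hstep
        · exact hmem _ htr

theorem IsRun.toNRun {Q A : Type*} {δ : Set (Q × A × Q)} :
    ∀ {w : List A} {p q : Q} {r}, IsRun δ w p q r → NRun δ w p q := by
  intro w
  induction w with
  | nil =>
      intro p q r h
      obtain ⟨hlen, hhead, hlast, -⟩ := h
      rcases r with _ | ⟨x, _ | ⟨y, r⟩⟩
      · simp at hhead
      · simp only [List.head?_cons, Option.some.injEq] at hhead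
        simp only [List.getLast?_singleton, Option.some.injEq] at hlast
        subst hhead; subst hlast; exact .nil _
      · simp at hlen
  | cons a w ih =>
      intro p q r h
      obtain ⟨hlen, hhead, hlast, hmem⟩ := h
      rcases r with _ | ⟨x, _ | ⟨y, r⟩⟩
      · simp at hhead
      · simp at hlen
      · simp only [List.head?_cons, Option.some.injEq] at hhead
        subst hhead
        have hstep : (x, a, y) ∈ δ := hmem (x, a, y) (by simp)
        have htail : IsRun δ w y q (y :: r) := by
          refine ⟨by simpa using hlen, rfl, by
            rw [List.getLast?_cons_cons] at hlast; exact hlast, ?_⟩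
          intro tr htr
          apply hmem
          simp only [List.zip_cons_cons, List.tail_cons, List.mem_cons]
          exact Or.inr htr
        exact NRun.cons hstep (ih htail)

theorem exists_isRun_iff {Q A : Type*} {δ : Set (Q × A × Q)} {w : List A} {p q : Q} :
    (∃ r, IsRun δ w p q r) ↔ NRun δ w p q :=
  ⟨fun ⟨_, h⟩ => h.toNRun, NRun.toIsRun⟩

theorem NRun.append {Q A : Type*} {δ : Set (Q × A × Q)} :
    ∀ {u v : List A} {p q r : Q}, NRun δ u p q → NRun δ v q r → NRun δ (u ++ v) p r := by
  intro u
  induction u with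
  | nil => intro v p q r h1 h2; cases h1; exact h2
  | cons a u ih =>
      intro v p q r h1 h2
      cases h1 with
      | cons hs ht => exact .cons hs (ih ht h2)

theorem NRun.split {Q A : Type*} {δ : Set (Q × A × Q)} :
    ∀ {u v : List A} {p r : Q}, NRun δ (u ++ v) p r → ∃ q, NRun δ u p q ∧ NRun δ v q r := by
  intro u
  induction u with
  | nil => exact fun h => ⟨_, .nil _, h⟩
  | cons a u ih =>
      intro v p r h
      cases h with
      | cons hs ht =>
          obtain ⟨q, h1, h2⟩ := ih ht
          exact ⟨q, .cons hs h1, h2⟩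

section AutoLemmas

variable {Q₁ Q₂ Q₃ A : Type*} (δ₁ : Q₁ × A → Q₁) (q₁I : Q₁) (F₁ : Set Q₁)
  (δ₂ : Q₂ × A → Q₂) (q₂I : Q₂) (F₂ : Set Q₂)
  (δ₃ : Q₃ × A → Q₃) (q₃I : Q₃) (F₃ : Set Q₃)

def ATrans : Set (((Q₁ ⊕ Q₂ ⊕ Q₃) ⊕ Bool) × (A ⊕ Bool) × ((Q₁ ⊕ Q₂ ⊕ Q₃) ⊕ Bool)) :=
  {tr |
      (∃ p σ, tr = (emb₁ p, Sum.inl σ, emb₁ (δ₁ (p, σ)))) ∨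
      (∃ p σ, tr = (emb₂ p, Sum.inl σ, emb₂ (δ₂ (p, σ)))) ∨
      (∃ p σ, tr = (emb₃ p, Sum.inl σ, emb₃ (δ₃ (p, σ)))) ∨
      tr = (Sum.inr false, Sum.inr false, emb₁ q₁I) ∨
      tr = (Sum.inr false, Sum.inr false, emb₂ q₂I) ∨
      tr = (Sum.inr true, Sum.inr false, emb₃ q₃I) ∨
      (∃ p, p ∈ F₁ ∧ tr = (emb₁ p, Sum.inr true, Sum.inr false)) ∨
      (∃ p, p ∈ F₂ ∧ tr = (emb₂ p, Sum.inr true, Sum.inr true)) ∨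
      (∃ p, p ∈ F₃ ∧ tr = (emb₃ p, Sum.inr true, Sum.inr true))}

/-- The "left part" of the state space: the copy of `Q₁` together with `s`. -/
def inL : ((Q₁ ⊕ Q₂ ⊕ Q₃) ⊕ Bool) → Prop :=
  fun x => (∃ a, x = emb₁ a) ∨ x = Sum.inr false

variable {δ₁ q₁I F₁ δ₂ q₂I F₂ δ₃ q₃I F₃}

local notation "AT" => ATrans δ₁ q₁I F₁ δ₂ q₂I F₂ δ₃ q₃I F₃

lemma inL₁ (a : Q₁) : inL (emb₁ a : (Q₁ ⊕ Q₂ ⊕ Q₃) ⊕ Bool) := Or.inl ⟨a, rfl⟩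
lemma inL_s : inL (Sum.inr false : (Q₁ ⊕ Q₂ ⊕ Q₃) ⊕ Bool) := Or.inr rfl
lemma notL₂ (b : Q₂) : ¬ inL (emb₂ b : (Q₁ ⊕ Q₂ ⊕ Q₃) ⊕ Bool) := by
  rintro (⟨a, h⟩ | h) <;> simp [emb₁, emb₂] at h
lemma notL₃ (c : Q₃) : ¬ inL (emb₃ c : (Q₁ ⊕ Q₂ ⊕ Q₃) ⊕ Bool) := by
  rintro (⟨a, h⟩ | h) <;> simp [emb₁, emb₃] at h
lemma notL_t : ¬ inL (Sum.inr true : (Q₁ ⊕ Q₂ ⊕ Q₃) ⊕ Bool) := by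
  rintro (⟨a, h⟩ | h) <;> simp [emb₁] at h

lemma step_from₁ {p : Q₁} {a y} (h : (emb₁ p, a, y) ∈ AT) :
    (∃ σ, a = Sum.inl σ ∧ y = emb₁ (δ₁ (p, σ))) ∨
      (p ∈ F₁ ∧ a = Sum.inr true ∧ y = Sum.inr false) := by
  rcases h with ⟨p',σ,h⟩|⟨p',σ,h⟩|⟨p',σ,h⟩|h|h|h|⟨p',hp',h⟩|⟨p',hp',h⟩|⟨p',hp',h⟩ <;>
    simp only [emb₁, emb₂, emb₃, Prod.mk.injEq, Sum.inl.injEq, reduceCtorEq,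
      false_and, and_false] at h
  · obtain ⟨rfl, rfl, rfl⟩ := h
    exact Or.inl ⟨σ, rfl, rfl⟩
  · obtain ⟨rfl, rfl, rfl⟩ := h
    exact Or.inr ⟨hp', rfl, rfl⟩

lemma step_from₂ {p : Q₂} {a y} (h : (emb₂ p, a, y) ∈ AT) :
    (∃ σ, a = Sum.inl σ ∧ y = emb₂ (δ₂ (p, σ))) ∨
      (p ∈ F₂ ∧ a = Sum.inr true ∧ y = Sum.inr true) := by
  rcases h with ⟨p',σ,h⟩|⟨p',σ,h⟩|⟨p',σ,h⟩|h|h|h|⟨p',hp',h⟩|⟨p',hp',h⟩|⟨p',hp',h⟩ <;>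
    simp only [emb₁, emb₂, emb₃, Prod.mk.injEq, Sum.inl.injEq, Sum.inr.injEq, reduceCtorEq,
      false_and, and_false] at h
  · obtain ⟨rfl, rfl, rfl⟩ := h
    exact Or.inl ⟨σ, rfl, rfl⟩
  · obtain ⟨rfl, rfl, rfl⟩ := h
    exact Or.inr ⟨hp', rfl, rfl⟩

lemma step_from₃ {p : Q₃} {a y} (h : (emb₃ p, a, y) ∈ AT) :
    (∃ σ, a = Sum.inl σ ∧ y = emb₃ (δ₃ (p, σ))) ∨
      (p ∈ F₃ ∧ a = Sum.inr true ∧ y = Sum.inr true) := by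
  rcases h with ⟨p',σ,h⟩|⟨p',σ,h⟩|⟨p',σ,h⟩|h|h|h|⟨p',hp',h⟩|⟨p',hp',h⟩|⟨p',hp',h⟩ <;>
    simp only [emb₁, emb₂, emb₃, Prod.mk.injEq, Sum.inl.injEq, Sum.inr.injEq, reduceCtorEq,
      false_and, and_false] at h
  · obtain ⟨rfl, rfl, rfl⟩ := h
    exact Or.inl ⟨σ, rfl, rfl⟩
  · obtain ⟨rfl, rfl, rfl⟩ := h
    exact Or.inr ⟨hp', rfl, rfl⟩

lemma step_from_t {a y} (h : ((Sum.inr true : (Q₁ ⊕ Q₂ ⊕ Q₃) ⊕ Bool), a, y) ∈ AT) :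
    a = Sum.inr false ∧ y = emb₃ q₃I := by
  rcases h with ⟨p',σ,h⟩|⟨p',σ,h⟩|⟨p',σ,h⟩|h|h|h|⟨p',hp',h⟩|⟨p',hp',h⟩|⟨p',hp',h⟩ <;>
    simp only [emb₁, emb₂, emb₃, Prod.mk.injEq, Sum.inl.injEq, Sum.inr.injEq, reduceCtorEq,
      false_and, and_false, Bool.true_eq_false] at h
  obtain ⟨-, rfl, rfl⟩ := h
  exact ⟨rfl, rfl⟩

lemma step_from_s {a y} (h : ((Sum.inr false : (Q₁ ⊕ Q₂ ⊕ Q₃) ⊕ Bool), a, y) ∈ AT) :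
    a = Sum.inr false ∧ (y = emb₁ q₁I ∨ y = emb₂ q₂I) := by
  rcases h with ⟨p',σ,h⟩|⟨p',σ,h⟩|⟨p',σ,h⟩|h|h|h|⟨p',hp',h⟩|⟨p',hp',h⟩|⟨p',hp',h⟩ <;>
    simp only [emb₁, emb₂, emb₃, Prod.mk.injEq, Sum.inl.injEq, Sum.inr.injEq, reduceCtorEq,
      false_and, and_false, Bool.false_eq_true] at h
  · obtain ⟨-, rfl, rfl⟩ := h
    exact ⟨rfl, Or.inl rfl⟩
  · obtain ⟨-, rfl, rfl⟩ := h
    exact ⟨rfl, Or.inr rfl⟩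

lemma notL_cases {x : (Q₁ ⊕ Q₂ ⊕ Q₃) ⊕ Bool} (hx : ¬ inL x) :
    (∃ b, x = emb₂ b) ∨ (∃ c, x = emb₃ c) ∨ x = Sum.inr true := by
  rcases x with (a | b | c) | (_ | _)
  · exact absurd (inL₁ a) hx
  · exact Or.inl ⟨b, rfl⟩
  · exact Or.inr (Or.inl ⟨c, rfl⟩)
  · exact absurd inL_s hx
  · exact Or.inr (Or.inr rfl)

lemma stepR_closed {x y : (Q₁ ⊕ Q₂ ⊕ Q₃) ⊕ Bool} {a} (hx : ¬ inL x)
    (h : (x, a, y) ∈ AT) : ¬ inL y := by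
  rcases notL_cases hx with ⟨b, rfl⟩ | ⟨c, rfl⟩ | rfl
  · rcases step_from₂ h with ⟨σ, rfl, rfl⟩ | ⟨-, rfl, rfl⟩
    · exact notL₂ _
    · exact notL_t
  · rcases step_from₃ h with ⟨σ, rfl, rfl⟩ | ⟨-, rfl, rfl⟩
    · exact notL₃ _
    · exact notL_t
  · obtain ⟨rfl, rfl⟩ := step_from_t h
    exact notL₃ _

lemma stepR_det {x y z : (Q₁ ⊕ Q₂ ⊕ Q₃) ⊕ Bool} {a} (hx : ¬ inL x)
    (h1 : (x, a, y) ∈ AT) (h2 : (x, a, z) ∈ AT) : y = z := by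
  rcases notL_cases hx with ⟨b, rfl⟩ | ⟨c, rfl⟩ | rfl
  · rcases step_from₂ h1 with ⟨σ, rfl, rfl⟩ | ⟨-, ha, rfl⟩ <;>
      rcases step_from₂ h2 with ⟨σ', hσ, rfl⟩ | ⟨-, ha', rfl⟩
    · obtain rfl : σ = σ' := by simpa using hσ
      rfl
    · simp at ha'
    · simp [ha] at hσ
    · rfl
  · rcases step_from₃ h1 with ⟨σ, rfl, rfl⟩ | ⟨-, ha, rfl⟩ <;>
      rcases step_from₃ h2 with ⟨σ', hσ, rfl⟩ | ⟨-, ha', rfl⟩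
    · obtain rfl : σ = σ' := by simpa using hσ
      rfl
    · simp at ha'
    · simp [ha] at hσ
    · rfl
  · obtain ⟨-, rfl⟩ := step_from_t h1
    obtain ⟨-, rfl⟩ := step_from_t h2
    rfl

lemma stepL_det {x y z : (Q₁ ⊕ Q₂ ⊕ Q₃) ⊕ Bool} {a} (hx : inL x)
    (hy : inL y) (hz : inL z) (h1 : (x, a, y) ∈ AT) (h2 : (x, a, z) ∈ AT) : y = z := by
  rcases hx with ⟨p, rfl⟩ | rfl
  · rcases step_from₁ h1 with ⟨σ, rfl, rfl⟩ | ⟨-, ha, rfl⟩ <;>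
      rcases step_from₁ h2 with ⟨σ', hσ, rfl⟩ | ⟨-, ha', rfl⟩
    · obtain rfl : σ = σ' := by simpa using hσ
      rfl
    · simp at ha'
    · simp [ha] at hσ
    · rfl
  · obtain ⟨-, hy1⟩ := step_from_s h1
    obtain ⟨-, hz1⟩ := step_from_s h2
    rcases hy1 with rfl | rfl
    · rcases hz1 with rfl | rfl
      · rfl
      · exact absurd hz (notL₂ _)
    · exact absurd hy (notL₂ _)

lemma stepL_cross {x y : (Q₁ ⊕ Q₂ ⊕ Q₃) ⊕ Bool} {a} (hx : inL x) (hy : ¬ inL y)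
    (h : (x, a, y) ∈ AT) : x = Sum.inr false ∧ a = Sum.inr false ∧ y = emb₂ q₂I := by
  rcases hx with ⟨p, rfl⟩ | rfl
  · rcases step_from₁ h with ⟨σ, rfl, rfl⟩ | ⟨-, rfl, rfl⟩
    · exact absurd (inL₁ _) hy
    · exact absurd inL_s hy
  · obtain ⟨rfl, hy1⟩ := step_from_s h
    rcases hy1 with rfl | rfl
    · exact absurd (inL₁ _) hy
    · exact ⟨rfl, rfl, rfl⟩

lemma runR_closed : ∀ {v} {x y : (Q₁ ⊕ Q₂ ⊕ Q₃) ⊕ Bool}, ¬ inL x →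
    NRun AT v x y → ¬ inL y := by
  intro v
  induction v with
  | nil => intro x y hx h; cases h; exact hx
  | cons a v ih =>
      intro x y hx h
      cases h with
      | cons hs ht => exact ih (stepR_closed hx hs) ht

lemma runR_det : ∀ {v} {x y z : (Q₁ ⊕ Q₂ ⊕ Q₃) ⊕ Bool}, ¬ inL x →
    NRun AT v x y → NRun AT v x z → y = z := by
  intro v
  induction v with
  | nil => intro x y z _ h1 h2; cases h1; cases h2; rfl
  | cons a v ih =>
      intro x y z hx h1 h2
      cases h1 with
      | cons hs ht =>
          cases h2 with
          | cons hs' ht' =>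
              obtain rfl := stepR_det hx hs hs'
              exact ih (stepR_closed hx hs) ht ht'

lemma runL_det : ∀ {v} {x y z : (Q₁ ⊕ Q₂ ⊕ Q₃) ⊕ Bool}, inL x → inL y → inL z →
    NRun AT v x y → NRun AT v x z → y = z := by
  intro v
  induction v with
  | nil => intro x y z _ _ _ h1 h2; cases h1; cases h2; rfl
  | cons a v ih =>
      intro x y z hx hy hz h1 h2
      cases h1 with
      | @cons _ x₁ _ _ _ hs ht =>
          cases h2 with
          | @cons _ x₂ _ _ _ hs' ht' =>
              by_cases hm : inL x₁
              · by_cases hm' : inL x₂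
                · obtain rfl := stepL_det hx hm hm' hs hs'
                  exact ih hm hy hz ht ht'
                · exact absurd hz (runR_closed hm' ht')
              · exact absurd hy (runR_closed hm ht)

lemma run_cross : ∀ {v} {x y : (Q₁ ⊕ Q₂ ⊕ Q₃) ⊕ Bool}, inL x → ¬ inL y →
    NRun AT v x y → ∃ v₁ v₂, v = v₁ ++ Sum.inr false :: v₂ ∧
      NRun AT v₁ x (Sum.inr false) ∧ NRun AT v₂ (emb₂ q₂I) y := by
  intro v
  induction v with
  | nil => intro x y hx hy h; cases h; exact absurd hx hy
  | cons a v ih =>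
      intro x y hx hy h
      cases h with
      | @cons _ x₁ _ _ _ hs ht =>
          by_cases hm : inL x₁
          · obtain ⟨v₁, v₂, rfl, hc1, hc2⟩ := ih hm hy ht
            exact ⟨a :: v₁, v₂, rfl, .cons hs hc1, hc2⟩
          · obtain ⟨rfl, rfl, rfl⟩ := stepL_cross hx hm hs
            exact ⟨[], v, rfl, .nil _, ht⟩

lemma threeRuns : ∀ {v} {a : Q₁} {b : Q₂} {c : Q₃} {y₁ q : (Q₁ ⊕ Q₂ ⊕ Q₃) ⊕ Bool},
    NRun AT v (emb₁ a) y₁ → NRun AT v (emb₂ b) q → NRun AT v (emb₃ c) q →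
    ∃ w : List A, (w.foldl (fun x σ => δ₁ (x, σ)) a) ∈ F₁ ∧
      (w.foldl (fun x σ => δ₂ (x, σ)) b) ∈ F₂ ∧ (w.foldl (fun x σ => δ₃ (x, σ)) c) ∈ F₃ := by
  intro v
  induction v with
  | nil =>
      intro a b c y₁ q h1 h2 h3
      cases h2
      cases h3
  | cons ℓ v ih =>
      intro a b c y₁ q h1 h2 h3
      cases h1 with
      | cons hs1 ht1 =>
          cases h2 with
          | cons hs2 ht2 =>
              cases h3 with
              | cons hs3 ht3 =>
                  rcases step_from₁ hs1 with ⟨σ, rfl, rfl⟩ | ⟨hF1, rfl, rfl⟩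
                  · rcases step_from₂ hs2 with ⟨σ', hσ, rfl⟩ | ⟨-, hσ, -⟩
                    swap
                    · simp at hσ
                    obtain rfl : σ = σ' := by simpa using hσ
                    rcases step_from₃ hs3 with ⟨σ'', hσ', rfl⟩ | ⟨-, hσ', -⟩
                    swap
                    · simp at hσ'
                    obtain rfl : σ = σ'' := by simpa using hσ'
                    obtain ⟨w, hw1, hw2, hw3⟩ := ih ht1 ht2 ht3
                    exact ⟨σ :: w, hw1, hw2, hw3⟩
                  · rcases step_from₂ hs2 with ⟨σ', hσ, -⟩ | ⟨hF2, -, rfl⟩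
                    · simp at hσ
                    rcases step_from₃ hs3 with ⟨σ'', hσ', -⟩ | ⟨hF3, -, rfl⟩
                    · simp at hσ'
                    exact ⟨[], hF1, hF2, hF3⟩

lemma embedRun {S B Q' : Type*} {δA : Set (S × B × S)} (e : Q' → S) (f : A → B)
    (δ' : Q' × A → Q') (h : ∀ p σ, (e p, f σ, e (δ' (p, σ))) ∈ δA) :
    ∀ (w : List A) (x : Q'),
      NRun δA (w.map f) (e x) (e (w.foldl (fun q σ => δ' (q, σ)) x)) := by
  intro w
  induction w with
  | nil => intro x; exact .nil _
  | cons a w ih => intro x; exact .cons (h x a) (ih (δ' (x, a)))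

lemma step_dollar {x y : (Q₁ ⊕ Q₂ ⊕ Q₃) ⊕ Bool} (h : (x, Sum.inr false, y) ∈ AT) :
    (x = Sum.inr false ∧ (y = emb₁ q₁I ∨ y = emb₂ q₂I)) ∨
      (x = Sum.inr true ∧ y = emb₃ q₃I) := by
  rcases x with (a | b | c) | (_ | _)
  · rcases step_from₁ h with ⟨σ, hσ, -⟩ | ⟨-, hσ, -⟩ <;> simp at hσ
  · rcases step_from₂ h with ⟨σ, hσ, -⟩ | ⟨-, hσ, -⟩ <;> simp at hσ
  · rcases step_from₃ h with ⟨σ, hσ, -⟩ | ⟨-, hσ, -⟩ <;> simp at hσ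
  · exact Or.inl ⟨rfl, (step_from_s h).2⟩
  · exact Or.inr ⟨rfl, (step_from_t h).2⟩

lemma mem_step₁ (p : Q₁) (σ : A) : ((emb₁ p : (Q₁ ⊕ Q₂ ⊕ Q₃) ⊕ Bool),
    Sum.inl σ, emb₁ (δ₁ (p, σ))) ∈ AT := Or.inl ⟨p, σ, rfl⟩
lemma mem_step₂ (p : Q₂) (σ : A) : ((emb₂ p : (Q₁ ⊕ Q₂ ⊕ Q₃) ⊕ Bool),
    Sum.inl σ, emb₂ (δ₂ (p, σ))) ∈ AT := Or.inr (Or.inl ⟨p, σ, rfl⟩)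
lemma mem_step₃ (p : Q₃) (σ : A) : ((emb₃ p : (Q₁ ⊕ Q₂ ⊕ Q₃) ⊕ Bool),
    Sum.inl σ, emb₃ (δ₃ (p, σ))) ∈ AT := Or.inr (Or.inr (Or.inl ⟨p, σ, rfl⟩))
lemma mem_s₁ : ((Sum.inr false : (Q₁ ⊕ Q₂ ⊕ Q₃) ⊕ Bool), Sum.inr false, emb₁ q₁I) ∈ AT :=
  Or.inr (Or.inr (Or.inr (Or.inl rfl)))
lemma mem_s₂ : ((Sum.inr false : (Q₁ ⊕ Q₂ ⊕ Q₃) ⊕ Bool), Sum.inr false, emb₂ q₂I) ∈ AT :=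
  Or.inr (Or.inr (Or.inr (Or.inr (Or.inl rfl))))
lemma mem_t₃ : ((Sum.inr true : (Q₁ ⊕ Q₂ ⊕ Q₃) ⊕ Bool), Sum.inr false, emb₃ q₃I) ∈ AT :=
  Or.inr (Or.inr (Or.inr (Or.inr (Or.inr (Or.inl rfl)))))
lemma mem_f₁ {p : Q₁} (hp : p ∈ F₁) : ((emb₁ p : (Q₁ ⊕ Q₂ ⊕ Q₃) ⊕ Bool),
    Sum.inr true, (Sum.inr false : (Q₁ ⊕ Q₂ ⊕ Q₃) ⊕ Bool)) ∈ AT :=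
  Or.inr (Or.inr (Or.inr (Or.inr (Or.inr (Or.inr (Or.inl ⟨p, hp, rfl⟩))))))
lemma mem_f₂ {p : Q₂} (hp : p ∈ F₂) : ((emb₂ p : (Q₁ ⊕ Q₂ ⊕ Q₃) ⊕ Bool),
    Sum.inr true, (Sum.inr true : (Q₁ ⊕ Q₂ ⊕ Q₃) ⊕ Bool)) ∈ AT :=
  Or.inr (Or.inr (Or.inr (Or.inr (Or.inr (Or.inr (Or.inr (Or.inl ⟨p, hp, rfl⟩)))))))
lemma mem_f₃ {p : Q₃} (hp : p ∈ F₃) : ((emb₃ p : (Q₁ ⊕ Q₂ ⊕ Q₃) ⊕ Bool),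
    Sum.inr true, (Sum.inr true : (Q₁ ⊕ Q₂ ⊕ Q₃) ⊕ Bool)) ∈ AT :=
  Or.inr (Or.inr (Or.inr (Or.inr (Or.inr (Or.inr (Or.inr (Or.inr ⟨p, hp, rfl⟩)))))))

end AutoLemmas

/-- Given three DFAs `D₁, D₂, D₃` over the alphabet `A`, two fresh
symbols `$ = Sum.inr false` and `# = Sum.inr true`, and two fresh states
`s = Sum.inr false` and `t = Sum.inr true`, let `A'` be the NFA with states
`(Q₁ ⊕ Q₂ ⊕ Q₃) ⊕ Bool`, initial state `s`, accepting state `t` and the transitions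
described in the statement. Then `A'` has the IDA property if and only if
`L(D₁) ∩ L(D₂) ∩ L(D₃) ≠ ∅`. -/
theorem ida_iff_three_dfa_intersection
    {Q₁ Q₂ Q₃ A : Type*} [Fintype Q₁] [Fintype Q₂] [Fintype Q₃]
    (δ₁ : Q₁ × A → Q₁) (q₁I : Q₁) (F₁ : Set Q₁)
    (δ₂ : Q₂ × A → Q₂) (q₂I : Q₂) (F₂ : Set Q₂)
    (δ₃ : Q₃ × A → Q₃) (q₃I : Q₃) (F₃ : Set Q₃)
    (s t : (Q₁ ⊕ Q₂ ⊕ Q₃) ⊕ Bool) (hs : s = Sum.inr false) (ht : t = Sum.inr true)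
    (δA : Set (((Q₁ ⊕ Q₂ ⊕ Q₃) ⊕ Bool) × (A ⊕ Bool) × ((Q₁ ⊕ Q₂ ⊕ Q₃) ⊕ Bool)))
    (hδA : δA = {tr |
      (∃ p σ, tr = (emb₁ p, Sum.inl σ, emb₁ (δ₁ (p, σ)))) ∨
      (∃ p σ, tr = (emb₂ p, Sum.inl σ, emb₂ (δ₂ (p, σ)))) ∨
      (∃ p σ, tr = (emb₃ p, Sum.inl σ, emb₃ (δ₃ (p, σ)))) ∨
      tr = (s, Sum.inr false, emb₁ q₁I) ∨
      tr = (s, Sum.inr false, emb₂ q₂I) ∨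
      tr = (t, Sum.inr false, emb₃ q₃I) ∨
      (∃ p, p ∈ F₁ ∧ tr = (emb₁ p, Sum.inr true, s)) ∨
      (∃ p, p ∈ F₂ ∧ tr = (emb₂ p, Sum.inr true, t)) ∨
      (∃ p, p ∈ F₃ ∧ tr = (emb₃ p, Sum.inr true, t))}) :
    (∃ (p q : (Q₁ ⊕ Q₂ ⊕ Q₃) ⊕ Bool) (v : List (A ⊕ Bool)), p ≠ q ∧ v ≠ [] ∧
        (∃ r, IsRun δA v p p r) ∧ (∃ r, IsRun δA v p q r) ∧ (∃ r, IsRun δA v q q r)) ↔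
      ∃ w : List A, DFAAccepts δ₁ q₁I F₁ w ∧ DFAAccepts δ₂ q₂I F₂ w ∧
        DFAAccepts δ₃ q₃I F₃ w := by
  subst hs; subst ht
  have hA : δA = ATrans δ₁ q₁I F₁ δ₂ q₂I F₂ δ₃ q₃I F₃ := hδA
  subst hA
  simp only [exists_isRun_iff]
  constructor
  · rintro ⟨p, q, v, hpq, -, h1, h2, h3⟩
    have hpL : inL p := by
      by_contra hp
      exact hpq (runR_det hp h1 h2)
    have hqR : ¬ inL q := fun hq => hpq (runL_det hpL hpL hq h1 h2)
    obtain ⟨v₁, v₂, rfl, -, hc2⟩ := run_cross hpL hqR h2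
    obtain ⟨m, h1a, h1b⟩ := NRun.split h1
    cases h1b with
    | cons hstep h1c =>
      rcases step_dollar hstep with ⟨rfl, hm'⟩ | ⟨rfl, hm'⟩
      · rcases hm' with rfl | rfl
        · obtain ⟨m₃, h3a, h3b⟩ := NRun.split h3
          have hm₃ : ¬ inL m₃ := runR_closed hqR h3a
          cases h3b with
          | cons hstep3 h3c =>
            rcases step_dollar hstep3 with ⟨rfl, -⟩ | ⟨rfl, rfl⟩
            · exact absurd inL_s hm₃
            · obtain ⟨w, hw1, hw2, hw3⟩ := threeRuns h1c hc2 h3c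
              exact ⟨w, hw1, hw2, hw3⟩
        · exact absurd hpL (runR_closed (notL₂ _) h1c)
      · subst hm'
        exact absurd hpL (runR_closed (notL₃ _) h1c)
  · rintro ⟨w, h1, h2, h3⟩
    refine ⟨Sum.inr false, Sum.inr true,
      Sum.inr false :: (w.map Sum.inl ++ [Sum.inr true]), by simp, by simp, ?_, ?_, ?_⟩
    · exact .cons mem_s₁ ((embedRun emb₁ Sum.inl δ₁ mem_step₁ w q₁I).append
        (.cons (mem_f₁ h1) (.nil _)))
    · exact .cons mem_s₂ ((embedRun emb₂ Sum.inl δ₂ mem_step₂ w q₂I).append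
        (.cons (mem_f₂ h2) (.nil _)))
    · exact .cons mem_t₃ ((embedRun emb₃ Sum.inl δ₃ mem_step₃ w q₃I).append
        (.cons (mem_f₃ h3) (.nil _)))
end
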